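/- arXiv:1307.6391 — 7 statements merged into one kernel-verified Lean document; each statement's English description precedes it below -/
import Mathlib

section
/- The number of partitions of m into exactly r parts is at most (m + r^2/2)^{r-1} / (r!(r-1)!). -/
open Finset

/-- Two strict monos composed with perms: equal comps give equal everything. -/
lemma strictMono_eq_of_comp_perm {k : ℕ} {f g : Fin k → ℕ} (hf : StrictMono f) (hg : StrictMono g)
    {σ τ : Equiv.Perm (Fin k)} (h : f ∘ σ = g ∘ τ) : f = g ∧ σ = τ := by
  have himg : Finset.image f Finset.univ = Finset.image g Finset.univ := by
    have h1 : Finset.image (f ∘ σ) Finset.univ = Finset.image f Finset.univ := by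
      rw [← Finset.image_image, Finset.image_univ_equiv]
    have h2 : Finset.image (g ∘ τ) Finset.univ = Finset.image g Finset.univ := by
      rw [← Finset.image_image, Finset.image_univ_equiv]
    rw [← h1, ← h2, h]
  have hcard : (Finset.image f Finset.univ).card = k := by
    rw [Finset.card_image_of_injective _ hf.injective, Finset.card_univ, Fintype.card_fin]
  have h1 : f = (Finset.image f Finset.univ).orderEmbOfFin hcard :=
    Finset.orderEmbOfFin_unique hcard (fun x => Finset.mem_image_of_mem _ (Finset.mem_univ x)) hf
  have h2 : g = (Finset.image f Finset.univ).orderEmbOfFin hcard :=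
    Finset.orderEmbOfFin_unique hcard
      (fun x => himg ▸ Finset.mem_image_of_mem _ (Finset.mem_univ x)) hg
  have hfg : f = g := h1.trans h2.symm
  refine ⟨hfg, Equiv.ext fun x => hf.injective ?_⟩
  have := congrFun h x
  simp only [Function.comp_apply] at this
  rw [this, hfg]

/-- sorted parts plus index. -/
def partFun {m : ℕ} (r : ℕ) (P : Nat.Partition m) : Fin r → ℕ :=
  fun i => (P.parts.sort (· ≤ ·)).getD i 0 + i

section partFun
variable {m r : ℕ} {P : Nat.Partition m}

lemma partFun_len (hP : P.parts.card = r) : (P.parts.sort (· ≤ ·)).length = r := by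
  rw [Multiset.length_sort]; exact hP

lemma partFun_getD (hP : P.parts.card = r) (i : Fin r) :
    (P.parts.sort (· ≤ ·)).getD i 0
      = (P.parts.sort (· ≤ ·)).get ⟨i, by rw [partFun_len hP]; exact i.2⟩ := by
  rw [List.getD_eq_getElem _ _ (by rw [partFun_len hP]; exact i.2)]
  rfl

lemma partFun_strictMono (hP : P.parts.card = r) : StrictMono (partFun r P) := by
  intro i j hij
  have hs : (P.parts.sort (· ≤ ·)).Pairwise (· ≤ ·) := Multiset.pairwise_sort (s := P.parts) (r := (· ≤ ·))
  have : (P.parts.sort (· ≤ ·)).getD i 0 ≤ (P.parts.sort (· ≤ ·)).getD j 0 := by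
    rw [partFun_getD hP i, partFun_getD hP j]
    exact hs.rel_get_of_le (by exact_mod_cast le_of_lt hij)
  unfold partFun
  omega

lemma partFun_pos (hP : P.parts.card = r) (i : Fin r) : 1 ≤ partFun r P i := by
  have hmem : (P.parts.sort (· ≤ ·)).getD i 0 ∈ P.parts := by
    rw [← Multiset.mem_sort (· ≤ ·), partFun_getD hP i]
    exact List.get_mem _ _
  have := P.parts_pos hmem
  unfold partFun
  omega

lemma partFun_sum (hP : P.parts.card = r) :
    ∑ i, partFun r P i = m + ∑ i : Fin r, (i : ℕ) := by
  unfold partFun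
  rw [Finset.sum_add_distrib]
  congr 1
  have hl := partFun_len (P := P) hP
  calc ∑ i : Fin r, (P.parts.sort (· ≤ ·)).getD i 0
      = ∑ i : Fin r,
          (fun j : Fin ((P.parts.sort (· ≤ ·)).length) => (P.parts.sort (· ≤ ·))[(j:ℕ)])
            (Fin.cast hl.symm i) := by
        refine Finset.sum_congr rfl fun i _ => ?_
        rw [partFun_getD hP]
        rfl
    _ = ∑ i : Fin ((P.parts.sort (· ≤ ·)).length), (P.parts.sort (· ≤ ·))[(i:ℕ)] :=
        Fin.sum_congr' _ hl.symm
    _ = (P.parts.sort (· ≤ ·)).sum := Fin.sum_univ_getElem _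
    _ = m := by
        have := Multiset.sort_eq (s := P.parts) (r := (· ≤ ·))
        calc (P.parts.sort (· ≤ ·)).sum = ((P.parts.sort (· ≤ ·) : List ℕ) : Multiset ℕ).sum := by
              rw [Multiset.sum_coe]
          _ = P.parts.sum := by rw [this]
          _ = m := P.parts_sum

lemma partFun_inj {P' : Nat.Partition m} (hP : P.parts.card = r) (hP' : P'.parts.card = r)
    (h : partFun r P = partFun r P') : P = P' := by
  have hlist : P.parts.sort (· ≤ ·) = P'.parts.sort (· ≤ ·) := by
    apply List.ext_getElem (by rw [partFun_len hP, partFun_len hP'])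
    intro n h1 h2
    have hn : n < r := by rwa [partFun_len hP] at h1
    have := congrFun h ⟨n, hn⟩
    unfold partFun at this
    rw [partFun_getD hP ⟨n, hn⟩, partFun_getD hP' ⟨n, hn⟩] at this
    simpa using this
  have : P.parts = P'.parts := by
    rw [← Multiset.sort_eq (s := P.parts) (r := (· ≤ ·)), ← Multiset.sort_eq (s := P'.parts) (r := (· ≤ ·)), hlist]
  exact Nat.Partition.ext this

end partFun

def psum {r : ℕ} (f : Fin r → ℕ) : Fin (r - 1) → ℕ :=
  fun i => ∑ j ∈ Finset.univ.filter (fun j : Fin r => (j : ℕ) ≤ (i : ℕ)), f j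

section psum
variable {r : ℕ} {f g : Fin r → ℕ}

lemma psum_strictMono (hf : ∀ i, 1 ≤ f i) : StrictMono (psum f) := by
  intro i j hij
  unfold psum
  have hjr : (j : ℕ) < r := lt_of_lt_of_le j.2 (Nat.sub_le r 1)
  refine Finset.sum_lt_sum_of_subset ?_ (i := ⟨(j : ℕ), hjr⟩) ?_ ?_ (hf _) fun k _ _ => Nat.zero_le _
  · intro k hk
    simp only [Finset.mem_filter, Finset.mem_univ, true_and] at hk ⊢
    omega
  · simp
  · simp only [Finset.mem_filter, Finset.mem_univ, true_and]
    exact_mod_cast not_le.2 hij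

lemma psum_inj (h : psum f = psum g) (hsum : ∑ i, f i = ∑ i, g i) : f = g := by
  have key : ∀ n : ℕ, ∀ hn : n < r, f ⟨n, hn⟩ = g ⟨n, hn⟩ := by
    intro n
    induction n using Nat.strong_induction_on with
    | _ n IH =>
      intro hn
      have hFS : ∑ j ∈ Finset.univ.filter (fun j : Fin r => (j : ℕ) ≤ n), f j
          = ∑ j ∈ Finset.univ.filter (fun j : Fin r => (j : ℕ) ≤ n), g j := by
        rcases lt_or_ge n (r - 1) with hlt | hge
        · exact congrFun h ⟨n, hlt⟩
        · have : (Finset.univ.filter (fun j : Fin r => (j : ℕ) ≤ n)) = Finset.univ := by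
            refine Finset.filter_true_of_mem fun j _ => ?_
            have := j.2; omega
          rw [this]; exact hsum
      have hsplit : (Finset.univ.filter (fun j : Fin r => (j : ℕ) ≤ n))
          = insert ⟨n, hn⟩ (Finset.univ.filter (fun j : Fin r => (j : ℕ) < n)) := by
        ext k
        simp only [Finset.mem_filter, Finset.mem_univ, true_and, Finset.mem_insert, Fin.ext_iff]
        omega
      have hnot : (⟨n, hn⟩ : Fin r) ∉ Finset.univ.filter (fun j : Fin r => (j : ℕ) < n) := by
        simp
      rw [hsplit, Finset.sum_insert hnot, Finset.sum_insert hnot] at hFS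
      have htail : ∑ j ∈ Finset.univ.filter (fun j : Fin r => (j : ℕ) < n), f j
          = ∑ j ∈ Finset.univ.filter (fun j : Fin r => (j : ℕ) < n), g j := by
        refine Finset.sum_congr rfl fun k hk => ?_
        simp only [Finset.mem_filter, Finset.mem_univ, true_and] at hk
        have := IH k hk k.2
        simpa using this
      omega
  funext j
  have := key j j.2
  simpa using this

lemma psum_ge_one (hr : 1 ≤ r) (hf : ∀ i, 1 ≤ f i) (i : Fin (r - 1)) : 1 ≤ psum f i := by
  unfold psum
  calc 1 ≤ f ⟨0, by omega⟩ := hf _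
    _ ≤ _ := Finset.single_le_sum (fun k _ => Nat.zero_le _) (by simp)

lemma psum_le (hf : ∀ i, 1 ≤ f i) (i : Fin (r - 1)) : psum f i + 1 ≤ ∑ j, f j := by
  have hrm : (r - 1 : ℕ) < r := by have := i.2; omega
  have hsplit := Finset.sum_filter_add_sum_filter_not Finset.univ
    (fun j : Fin r => (j : ℕ) ≤ (i : ℕ)) f
  have hmem : (⟨r - 1, hrm⟩ : Fin r) ∈ Finset.univ.filter
      (fun j : Fin r => ¬ (j : ℕ) ≤ (i : ℕ)) := by
    simp only [Finset.mem_filter, Finset.mem_univ, true_and]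
    have := i.2; omega
  have h1 : 1 ≤ ∑ j ∈ Finset.univ.filter (fun j : Fin r => ¬ (j : ℕ) ≤ (i : ℕ)), f j :=
    le_trans (hf _) (Finset.single_le_sum (fun k _ => Nat.zero_le _) hmem)
  unfold psum
  omega

end psum


theorem key_nat (m r : ℕ) (hr : 1 ≤ r) :
    ((Finset.univ.filter fun P : Nat.Partition m => P.parts.card = r).card)
        * (Nat.factorial r * Nat.factorial (r - 1))
      ≤ ((m + ∑ i : Fin r, (i : ℕ)) - 1) ^ (r - 1) := by
  classical
  set N := m + ∑ i : Fin r, (i : ℕ) with hN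
  set s : Finset (Nat.Partition m × Equiv.Perm (Fin r) × Equiv.Perm (Fin (r - 1))) :=
    (Finset.univ.filter fun P : Nat.Partition m => P.parts.card = r) ×ˢ
      (Finset.univ ×ˢ Finset.univ) with hs
  set t : Finset (Fin (r - 1) → ℕ) := Fintype.piFinset fun _ => Finset.Icc 1 (N - 1) with ht
  have hcard_s : s.card = (Finset.univ.filter fun P : Nat.Partition m =>
      P.parts.card = r).card * (Nat.factorial r * Nat.factorial (r - 1)) := by
    rw [hs, Finset.card_product, Finset.card_product, Finset.card_univ, Finset.card_univ,
      Fintype.card_perm, Fintype.card_perm, Fintype.card_fin, Fintype.card_fin]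
  have hcard_t : t.card = (N - 1) ^ (r - 1) := by
    rw [ht, Fintype.card_piFinset]
    simp [Nat.card_Icc]
  have hle : s.card ≤ t.card := by
    apply Finset.card_le_card_of_injOn
      (fun x => (psum ((partFun r x.1) ∘ x.2.1)) ∘ x.2.2)
    · rintro ⟨P, σ, τ⟩ hx
      simp only [hs, Finset.mem_coe, Finset.mem_product, Finset.mem_filter, Finset.mem_univ, true_and,
        and_true] at hx
      have hP : P.parts.card = r := hx
      have hpos : ∀ i, 1 ≤ (partFun r P ∘ σ) i := fun i => partFun_pos hP _
      have hsum : ∑ i, (partFun r P ∘ σ) i = N := by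
        rw [show ∑ i, (partFun r P ∘ σ) i = ∑ i, partFun r P i from
          Equiv.sum_comp σ (partFun r P), partFun_sum hP]
      rw [ht, Finset.mem_coe, Fintype.mem_piFinset]
      intro i
      simp only [Function.comp_apply, Finset.mem_Icc]
      have h1 := psum_ge_one hr hpos (τ i)
      have h2 := psum_le hpos (τ i)
      omega
    · rintro ⟨P, σ, τ⟩ hx ⟨P', σ', τ'⟩ hy hxy
      simp only [hs, Finset.coe_product, Set.mem_prod, Finset.coe_filter, Set.mem_setOf_eq,
        Finset.mem_univ, true_and, Finset.coe_univ, Set.mem_univ, and_true] at hx hy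
      have hP : P.parts.card = r := hx
      have hP' : P'.parts.card = r := hy
      have hpos : ∀ i, 1 ≤ (partFun r P ∘ σ) i := fun i => partFun_pos hP _
      have hpos' : ∀ i, 1 ≤ (partFun r P' ∘ σ') i := fun i => partFun_pos hP' _
      have hsm : StrictMono (psum (partFun r P ∘ σ)) := psum_strictMono hpos
      have hsm' : StrictMono (psum (partFun r P' ∘ σ')) := psum_strictMono hpos'
      obtain ⟨h1, h2⟩ := strictMono_eq_of_comp_perm hsm hsm' hxy
      have hsumeq : ∑ i, (partFun r P ∘ σ) i = ∑ i, (partFun r P' ∘ σ') i := by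
        rw [show ∑ i, (partFun r P ∘ σ) i = ∑ i, partFun r P i from
          Equiv.sum_comp σ (partFun r P), partFun_sum hP,
          show ∑ i, (partFun r P' ∘ σ') i = ∑ i, partFun r P' i from
          Equiv.sum_comp σ' (partFun r P'), partFun_sum hP']
      have hcomp : partFun r P ∘ σ = partFun r P' ∘ σ' := psum_inj h1 hsumeq
      obtain ⟨h3, h4⟩ := strictMono_eq_of_comp_perm (partFun_strictMono hP)
        (partFun_strictMono hP') hcomp
      have hPP : P = P' := partFun_inj hP hP' h3
      simp only [Prod.mk.injEq]
      exact ⟨hPP, h4, h2⟩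
  omega

/-- The number of partitions of `m` into exactly `r` parts is at most
`(m + r²/2)^{r-1} / (r!(r-1)!)`. -/
theorem partition_count_upper_bound' (m r : ℕ) (hr : 1 ≤ r) :
    ((Finset.univ.filter fun P : Nat.Partition m => P.parts.card = r).card : ℝ) ≤
      ((m : ℝ) + (r : ℝ) ^ 2 / 2) ^ (r - 1) /
        ((Nat.factorial r : ℝ) * (Nat.factorial (r - 1) : ℝ)) := by
  have hfac : (0 : ℝ) < (Nat.factorial r : ℝ) * (Nat.factorial (r - 1) : ℝ) := by
    positivity
  rw [le_div_iff₀ hfac]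
  set N := m + ∑ i : Fin r, (i : ℕ) with hNdef
  have key := key_nat m r hr
  have hbase : ((N - 1 : ℕ) : ℝ) ≤ (m : ℝ) + (r : ℝ) ^ 2 / 2 := by
    have h1 : ((N - 1 : ℕ) : ℝ) ≤ (N : ℝ) := Nat.cast_le.2 (Nat.sub_le _ _)
    have h2 : (∑ i : Fin r, (i : ℕ)) * 2 = r * (r - 1) := by
      rw [Fin.sum_univ_eq_sum_range (fun i => i) r]
      exact Finset.sum_range_id_mul_two r
    have h3 : ((∑ i : Fin r, (i : ℕ)) : ℝ) ≤ (r : ℝ) ^ 2 / 2 := by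
      rw [le_div_iff₀ (by norm_num : (0:ℝ) < 2)]
      have : ((∑ i : Fin r, (i : ℕ)) * 2 : ℕ) ≤ r * r := by
        rw [h2]; exact Nat.mul_le_mul_left r (Nat.sub_le _ _)
      calc ((∑ i : Fin r, (i : ℕ)) : ℝ) * 2 = (((∑ i : Fin r, (i : ℕ)) * 2 : ℕ) : ℝ) := by
            push_cast; ring
        _ ≤ ((r * r : ℕ) : ℝ) := Nat.cast_le.2 this
        _ = (r : ℝ) ^ 2 := by push_cast; ring
    calc ((N - 1 : ℕ) : ℝ) ≤ (N : ℝ) := h1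
      _ = (m : ℝ) + ((∑ i : Fin r, (i : ℕ)) : ℝ) := by rw [hNdef]; push_cast; ring
      _ ≤ (m : ℝ) + (r : ℝ) ^ 2 / 2 := by linarith
  calc ((Finset.univ.filter fun P : Nat.Partition m => P.parts.card = r).card : ℝ) *
        ((Nat.factorial r : ℝ) * (Nat.factorial (r - 1) : ℝ))
      = (((Finset.univ.filter fun P : Nat.Partition m => P.parts.card = r).card *
          (Nat.factorial r * Nat.factorial (r - 1)) : ℕ) : ℝ) := by push_cast; ring
    _ ≤ (((N - 1) ^ (r - 1) : ℕ) : ℝ) := Nat.cast_le.2 key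
    _ = ((N - 1 : ℕ) : ℝ) ^ (r - 1) := by push_cast; ring
    _ ≤ ((m : ℝ) + (r : ℝ) ^ 2 / 2) ^ (r - 1) :=
        pow_le_pow_left₀ (Nat.cast_nonneg _) hbase _
end

section
/- If a Wilf partition of n is a fixed point of the part-multiplicity interchange involution, then n ≡ k (mod 2), where k is the sum of p^2 over the part-multiplicity pairs (p,p) with equal part and multiplicity; equivalently, n - k is even. -/
/-- `S` is (the part-multiplicity representation of) a Wilf partition of `n`:
a finite set of pairs `(p, m)` of positive integers with all first coordinates
distinct and all second coordinates distinct, and `∑ p·m = n`. -/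
def IsWilfPartition (n : ℕ) (S : Finset (ℕ × ℕ)) : Prop :=
  (∀ q ∈ S, 0 < q.1 ∧ 0 < q.2) ∧
  (∀ q ∈ S, ∀ q' ∈ S, q.1 = q'.1 → q = q') ∧
  (∀ q ∈ S, ∀ q' ∈ S, q.2 = q'.2 → q = q') ∧
  ∑ q ∈ S, q.1 * q.2 = n

/-- `S` is a fixed point of the part-multiplicity interchange involution. -/
def IsFixedWilf (S : Finset (ℕ × ℕ)) : Prop :=
  ∀ q ∈ S, (q.2, q.1) ∈ S

/-- For a fixed-point Wilf partition of `n`, if `k` is the sum of `p²` over the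
diagonal pairs `(p,p)`, then `n ≡ k (mod 2)`; equivalently `n - k` is even. -/
theorem wilf_fixed_point_parity (n : ℕ) (S : Finset (ℕ × ℕ))
    (hS : IsWilfPartition n S) (hfix : IsFixedWilf S) (k : ℕ)
    (hk : k = ∑ q ∈ S.filter (fun q => q.1 = q.2), q.1 ^ 2) :
    n % 2 = k % 2 ∧ k ≤ n ∧ Even (n - k) := by
  have hdiag : ∑ q ∈ S.filter (fun q => q.1 = q.2), q.1 * q.2 = k := by
    rw [hk]
    refine Finset.sum_congr rfl ?_
    intro q hq
    rw [Finset.mem_filter] at hq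
    rw [sq, hq.2]
  have hsplit : k + ∑ q ∈ S.filter (fun q => ¬ q.1 = q.2), q.1 * q.2 = n := by
    rw [← hdiag, Finset.sum_filter_add_sum_filter_not]
    exact hS.2.2.2
  have heven : Even (∑ q ∈ S.filter (fun q => ¬ q.1 = q.2), q.1 * q.2) := by
    have h0 : ((∑ q ∈ S.filter (fun q => ¬ q.1 = q.2), q.1 * q.2 : ℕ) : ZMod 2) = 0 := by
      push_cast
      refine Finset.sum_involution (fun q _ => (q.2, q.1)) ?_ ?_ ?_ ?_
      · intro q _
        rw [mul_comm]
        exact CharTwo.add_self_eq_zero _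
      · intro q hq _
        rw [Finset.mem_filter] at hq
        intro h
        exact hq.2 (congrArg Prod.fst h).symm
      · intro q hq
        rw [Finset.mem_filter] at hq ⊢
        exact ⟨hfix q hq.1, fun h => hq.2 h.symm⟩
      · intro q _
        rfl
    rw [ZMod.natCast_eq_zero_iff] at h0
    exact even_iff_two_dvd.mpr h0
  obtain ⟨m, hm⟩ := heven
  refine ⟨by omega, by omega, ⟨m, by omega⟩⟩
end

section
/- Every fixed-point Wilf partition of n decomposes uniquely as: a set of diagonal pairs (p,p), contributing a partition of some k ≤ n into distinct squares, together with pairs of off-diagonal pairs {(p,m),(m,p)} with p ≠ m, whose contribution 2pm sums to n - k; in particular n - k is even. -/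
/-- Every fixed-point Wilf partition of `n` decomposes as: the diagonal pairs
`(p,p)`, giving a partition of some `k ≤ n` into distinct squares, together with
pairs of off-diagonal pairs `{(p,m),(m,p)}` with `p ≠ m`, whose contribution
`2pm` sums to `n - k`; in particular `n - k` is even. -/
theorem wilf_fixed_point_decomposition (n : ℕ) (S : Finset (ℕ × ℕ))
    (hS : IsWilfPartition n S) (hfix : IsFixedWilf S)
    (D : Finset (ℕ × ℕ)) (hD : D = S.filter (fun q => q.1 = q.2)) (k : ℕ)
    (hk : k = ∑ q ∈ D, q.1 * q.2) :
    k ≤ n ∧ Even (n - k) ∧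
      -- the diagonal part is a partition of `k` into distinct squares
      (∑ q ∈ D, q.1 ^ 2 = k ∧ ∀ q ∈ D, ∀ q' ∈ D, q.1 = q'.1 → q = q') ∧
      -- the off-diagonal pairs come in swapped couples `{(p,m),(m,p)}`, `p ≠ m`
      (∀ q ∈ S \ D, q.1 ≠ q.2 ∧ (q.2, q.1) ∈ S \ D) ∧
      -- each couple contributes `2pm`, and these contributions sum to `n - k`
      2 * ∑ q ∈ (S \ D).filter (fun q => q.2 < q.1), q.1 * q.2 = n - k := by
  obtain ⟨hpos, h1, h2, hsum⟩ := hS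
  have hDsub : D ⊆ S := by rw [hD]; exact Finset.filter_subset _ _
  -- sum splitting
  have hsplit : k + ∑ q ∈ S \ D, q.1 * q.2 = n := by
    rw [hk, ← hsum, add_comm]
    exact Finset.sum_sdiff hDsub
  have hkn : k ≤ n := by omega
  -- off-diagonal symmetry
  have hoff : ∀ q ∈ S \ D, q.1 ≠ q.2 ∧ (q.2, q.1) ∈ S \ D := by
    intro q hq
    rw [Finset.mem_sdiff, hD, Finset.mem_filter] at hq
    have hqS : q ∈ S := hq.1
    have hne : q.1 ≠ q.2 := fun h => hq.2 ⟨hqS, h⟩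
    refine ⟨hne, ?_⟩
    rw [Finset.mem_sdiff, hD, Finset.mem_filter]
    exact ⟨hfix q hqS, fun h => hne (h.2.symm)⟩
  -- pairing sum
  have hpair : ∑ q ∈ (S \ D).filter (fun q => q.2 < q.1), q.1 * q.2
      = ∑ q ∈ (S \ D).filter (fun q => q.1 < q.2), q.1 * q.2 := by
    apply Finset.sum_nbij' (fun q => (q.2, q.1)) (fun q => (q.2, q.1))
    · intro q hq
      rw [Finset.mem_filter] at hq ⊢
      exact ⟨(hoff q hq.1).2, hq.2⟩
    · intro q hq
      rw [Finset.mem_filter] at hq ⊢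
      exact ⟨(hoff q hq.1).2, hq.2⟩
    · intro q _; rfl
    · intro q _; rfl
    · intro q _; exact Nat.mul_comm q.1 q.2
  have hsdiffsum : ∑ q ∈ S \ D, q.1 * q.2 =
      ∑ q ∈ (S \ D).filter (fun q => q.2 < q.1), q.1 * q.2 +
      ∑ q ∈ (S \ D).filter (fun q => q.1 < q.2), q.1 * q.2 := by
    rw [← Finset.sum_filter_add_sum_filter_not (S \ D) (fun q => q.2 < q.1)]
    congr 1
    apply Finset.sum_congr _ (fun _ _ => rfl)
    apply Finset.filter_congr
    intro q hq
    have hne := (hoff q hq).1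
    simp only [not_lt]
    constructor
    · intro h; omega
    · intro h; omega
  have h2sum : 2 * ∑ q ∈ (S \ D).filter (fun q => q.2 < q.1), q.1 * q.2 = n - k := by
    omega
  refine ⟨hkn, ⟨∑ q ∈ (S \ D).filter (fun q => q.2 < q.1), q.1 * q.2, by omega⟩, ?_, hoff, h2sum⟩
  constructor
  · rw [hk]
    apply Finset.sum_congr rfl
    intro q hq
    rw [hD, Finset.mem_filter] at hq
    rw [sq, hq.2]
  · intro q hq q' hq' h
    exact h1 q (hDsub hq) q' (hDsub hq') h
end

section
/- Every positive integer n ∉ {2,3,7,11,15} has a Wilf partition that is a fixed point of the part-multiplicity involution. -/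
lemma pair_wilf (b c : ℕ) (hb : 0 < b) (hc : 0 < c) (hbc : b ≠ c) :
    IsWilfPartition (2 * (b * c)) {(b, c), (c, b)} ∧ IsFixedWilf {(b, c), (c, b)} := by
  have hne : ((b, c) : ℕ × ℕ) ∉ ({(c, b)} : Finset (ℕ × ℕ)) := by
    simp [Prod.ext_iff]; omega
  refine ⟨⟨?_, ?_, ?_, ?_⟩, ?_⟩
  · intro q hq; simp [Finset.mem_insert] at hq; rcases hq with h | h <;> simp [h, hb, hc]
  · intro q hq q' hq'; simp [Finset.mem_insert] at hq hq'
    rcases hq with h | h <;> rcases hq' with h' | h' <;> simp [h, h', Prod.ext_iff] <;> omega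
  · intro q hq q' hq'; simp [Finset.mem_insert] at hq hq'
    rcases hq with h | h <;> rcases hq' with h' | h' <;> simp [h, h', Prod.ext_iff] <;> omega
  · rw [Finset.sum_insert hne, Finset.sum_singleton]; ring
  · intro q hq; simp [Finset.mem_insert] at hq ⊢
    rcases hq with h | h <;> simp [h]

lemma triple_wilf (a b c : ℕ) (ha : 0 < a) (hb : 0 < b) (hc : 0 < c)
    (hab : a ≠ b) (hac : a ≠ c) (hbc : b ≠ c) :
    IsWilfPartition (a * a + 2 * (b * c)) {(a, a), (b, c), (c, b)} ∧
      IsFixedWilf {(a, a), (b, c), (c, b)} := by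
  have h1 : ((a, a) : ℕ × ℕ) ∉ ({(b, c), (c, b)} : Finset (ℕ × ℕ)) := by
    simp [Prod.ext_iff]; omega
  have h2 : ((b, c) : ℕ × ℕ) ∉ ({(c, b)} : Finset (ℕ × ℕ)) := by
    simp [Prod.ext_iff]; omega
  refine ⟨⟨?_, ?_, ?_, ?_⟩, ?_⟩
  · intro q hq; simp [Finset.mem_insert] at hq
    rcases hq with h | h | h <;> simp [h, ha, hb, hc]
  · intro q hq q' hq'; simp [Finset.mem_insert] at hq hq'
    rcases hq with h | h | h <;> rcases hq' with h' | h' | h' <;>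
      simp [h, h', Prod.ext_iff] <;> omega
  · intro q hq q' hq'; simp [Finset.mem_insert] at hq hq'
    rcases hq with h | h | h <;> rcases hq' with h' | h' | h' <;>
      simp [h, h', Prod.ext_iff] <;> omega
  · rw [Finset.sum_insert h1, Finset.sum_insert h2, Finset.sum_singleton]; ring
  · intro q hq; simp [Finset.mem_insert] at hq ⊢
    rcases hq with h | h | h <;> simp [h]

/-- Every positive integer `n ∉ {2,3,7,11,15}` has a fixed-point Wilf partition. -/
theorem fixed_wilf_exists (n : ℕ) (hpos : 0 < n)
    (hex : n ∉ ({2, 3, 7, 11, 15} : Finset ℕ)) :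
    ∃ S : Finset (ℕ × ℕ), IsWilfPartition n S ∧ IsFixedWilf S := by
  simp only [Finset.mem_insert, Finset.mem_singleton] at hex
  push_neg at hex
  obtain ⟨e2, e3, e7, e11, e15⟩ := hex
  by_cases h1 : n = 1
  · subst h1
    exact ⟨{(1, 1)}, by unfold IsWilfPartition; decide, by unfold IsFixedWilf; decide⟩
  by_cases h5 : n = 5
  · subst h5
    exact ⟨{(1, 1), (2, 2)}, by unfold IsWilfPartition; decide, by unfold IsFixedWilf; decide⟩
  by_cases h9 : n = 9
  · subst h9
    exact ⟨{(3, 3)}, by unfold IsWilfPartition; decide, by unfold IsFixedWilf; decide⟩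
  by_cases he : n % 2 = 0
  · -- even, n ≥ 4
    have := pair_wilf 1 (n / 2) one_pos (by omega) (by omega)
    refine ⟨_, ?_, this.2⟩
    have hm : 2 * (1 * (n / 2)) = n := by omega
    have h := this.1; rwa [hm] at h
  by_cases he2 : (n - 1) / 2 % 2 = 0
  · -- n ≡ 1 mod 4, n ≥ 13
    have := triple_wilf 1 2 ((n - 1) / 4) one_pos two_pos (by omega) (by omega) (by omega)
      (by omega)
    refine ⟨_, ?_, this.2⟩
    have hm : 1 * 1 + 2 * (2 * ((n - 1) / 4)) = n := by omega
    have h := this.1; rwa [hm] at h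
  · -- n ≡ 3 mod 4, n ≥ 19
    have := triple_wilf 3 1 ((n - 9) / 2) (by omega) one_pos (by omega) (by omega) (by omega)
      (by omega)
    refine ⟨_, ?_, this.2⟩
    have hm : 3 * 3 + 2 * (1 * ((n - 9) / 2)) = n := by omega
    have h := this.1; rwa [hm] at h
end

section
/- For any fixed K ≥ 1 and R ≥ 1, given 2RK distinct positive integers x_1 < x_2 < ... < x_{2RK}, and any K permutations σ_1,...,σ_K of {1,...,R}, the set of pairs {(x_{(i-1)R+j}, x_{(2K-i)R+σ_i(j)}) : 1 ≤ i ≤ K, 1 ≤ j ≤ R} ∪ {(x_{(2K-i)R+σ_i(j)}, x_{(i-1)R+j}) : 1 ≤ i ≤ K, 1 ≤ j ≤ R} has distinct first coordinates and distinct second coordinates, and is invariant under swapping coordinates; hence it is a fixed-point Wilf partition of its total weight. -/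
lemma wilf_key (R i j i' j' : ℕ) (hj1 : 1 ≤ j) (hj2 : j ≤ R) (hj1' : 1 ≤ j')
    (hj2' : j' ≤ R) (h : i * R + j = i' * R + j') : i = i' ∧ j = j' := by
  rcases lt_trichotomy i i' with hlt | heq | hgt
  · exfalso
    have h2 : i * R + R = (i + 1) * R := by ring
    have h3 : (i + 1) * R ≤ i' * R := Nat.mul_le_mul_right _ (by omega)
    omega
  · subst heq; exact ⟨rfl, by omega⟩
  · exfalso
    have h2 : i' * R + R = (i' + 1) * R := by ring
    have h3 : (i' + 1) * R ≤ i * R := Nat.mul_le_mul_right _ (by omega)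
    omega

/-- Given `2RK` distinct positive integers `x 1 < ⋯ < x (2RK)` and `K`
permutations `σ 1, …, σ K` of `{1,…,R}`, the set of pairs
`(x ((i-1)R+j), x ((2K-i)R+σ i j))` for `1 ≤ i ≤ K`, `1 ≤ j ≤ R`, together with
their swaps, has distinct first coordinates and distinct second coordinates and
is invariant under swapping; hence it is a fixed-point Wilf partition of its
total weight. -/
theorem fixed_wilf_construction (K R : ℕ) (hK : 1 ≤ K) (hR : 1 ≤ R)
    (x : ℕ → ℕ) (hxpos : ∀ i, 1 ≤ i → i ≤ 2 * R * K → 0 < x i)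
    (hxmono : ∀ i j, 1 ≤ i → i < j → j ≤ 2 * R * K → x i < x j)
    (σ : ℕ → ℕ → ℕ)
    (hσ : ∀ i, 1 ≤ i → i ≤ K → Set.BijOn (σ i) (Set.Icc 1 R) (Set.Icc 1 R))
    (S : Finset (ℕ × ℕ))
    (hS : S = ((Finset.Icc 1 K ×ˢ Finset.Icc 1 R).image
          (fun ij => (x ((ij.1 - 1) * R + ij.2), x ((2 * K - ij.1) * R + σ ij.1 ij.2))))
        ∪ ((Finset.Icc 1 K ×ˢ Finset.Icc 1 R).image
          (fun ij => (x ((2 * K - ij.1) * R + σ ij.1 ij.2), x ((ij.1 - 1) * R + ij.2))))) :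
    IsWilfPartition (∑ q ∈ S, q.1 * q.2) S ∧ IsFixedWilf S := by
  -- membership characterization
  have memS : ∀ q : ℕ × ℕ, q ∈ S ↔
      (∃ i j, (1 ≤ i ∧ i ≤ K) ∧ (1 ≤ j ∧ j ≤ R) ∧
        q = (x ((i - 1) * R + j), x ((2 * K - i) * R + σ i j))) ∨
      (∃ i j, (1 ≤ i ∧ i ≤ K) ∧ (1 ≤ j ∧ j ≤ R) ∧
        q = (x ((2 * K - i) * R + σ i j), x ((i - 1) * R + j))) := by
    intro q
    subst hS
    simp only [Finset.mem_union, Finset.mem_image, Finset.mem_product, Finset.mem_Icc,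
      Prod.exists]
    constructor
    · rintro (⟨i, j, ⟨h1, h2⟩, h3⟩ | ⟨i, j, ⟨h1, h2⟩, h3⟩)
      · exact Or.inl ⟨i, j, h1, h2, h3.symm⟩
      · exact Or.inr ⟨i, j, h1, h2, h3.symm⟩
    · rintro (⟨i, j, h1, h2, h3⟩ | ⟨i, j, h1, h2, h3⟩)
      · exact Or.inl ⟨i, j, ⟨h1, h2⟩, h3.symm⟩
      · exact Or.inr ⟨i, j, ⟨h1, h2⟩, h3.symm⟩
  -- σ bounds and injectivity
  have hσb : ∀ i j, 1 ≤ i → i ≤ K → 1 ≤ j → j ≤ R → 1 ≤ σ i j ∧ σ i j ≤ R := by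
    intro i j hi1 hi2 hj1 hj2
    have := (hσ i hi1 hi2).mapsTo (Set.mem_Icc.mpr ⟨hj1, hj2⟩)
    exact Set.mem_Icc.mp this
  have hσinj : ∀ i j j', 1 ≤ i → i ≤ K → 1 ≤ j → j ≤ R → 1 ≤ j' → j' ≤ R →
      σ i j = σ i j' → j = j' := by
    intro i j j' hi1 hi2 hj1 hj2 hj1' hj2' h
    exact (hσ i hi1 hi2).injOn (Set.mem_Icc.mpr ⟨hj1, hj2⟩) (Set.mem_Icc.mpr ⟨hj1', hj2'⟩) h
  -- index bounds
  have hKR2 : K * R ≤ 2 * R * K := by nlinarith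
  have h2KR : 2 * K * R = 2 * R * K := by ring
  have hA : ∀ i j, 1 ≤ i → i ≤ K → 1 ≤ j → j ≤ R →
      1 ≤ (i - 1) * R + j ∧ (i - 1) * R + j ≤ K * R := by
    intro i j hi1 hi2 hj1 hj2
    refine ⟨by omega, ?_⟩
    have h3 : (i - 1 + 1) * R ≤ K * R := Nat.mul_le_mul_right _ (by omega)
    have h4 : (i - 1 + 1) * R = (i - 1) * R + R := by ring
    omega
  have hB : ∀ i j, 1 ≤ i → i ≤ K → 1 ≤ j → j ≤ R →
      K * R + 1 ≤ (2 * K - i) * R + σ i j ∧ (2 * K - i) * R + σ i j ≤ 2 * R * K := by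
    intro i j hi1 hi2 hj1 hj2
    obtain ⟨hs1, hs2⟩ := hσb i j hi1 hi2 hj1 hj2
    have hl : K * R ≤ (2 * K - i) * R := Nat.mul_le_mul_right _ (by omega)
    have hu : ((2 * K - i) + 1) * R ≤ 2 * K * R := Nat.mul_le_mul_right _ (by omega)
    have h4 : ((2 * K - i) + 1) * R = (2 * K - i) * R + R := by ring
    omega
  -- injectivity of x on [1, 2RK]
  have injx : ∀ a b, 1 ≤ a → a ≤ 2 * R * K → 1 ≤ b → b ≤ 2 * R * K → x a = x b → a = b := by
    intro a b ha1 ha2 hb1 hb2 h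
    rcases lt_trichotomy a b with hlt | heq | hgt
    · exact absurd h (Nat.ne_of_lt (hxmono a b ha1 hlt hb2))
    · exact heq
    · exact absurd h.symm (Nat.ne_of_lt (hxmono b a hb1 hgt ha2))
  -- injectivity of index maps on the parameter domain
  have injA : ∀ i j i' j', 1 ≤ i → i ≤ K → 1 ≤ j → j ≤ R → 1 ≤ i' → i' ≤ K →
      1 ≤ j' → j' ≤ R → (i - 1) * R + j = (i' - 1) * R + j' → i = i' ∧ j = j' := by
    intro i j i' j' hi1 hi2 hj1 hj2 hi1' hi2' hj1' hj2' h
    obtain ⟨h1, h2⟩ := wilf_key R (i - 1) j (i' - 1) j' hj1 hj2 hj1' hj2' h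
    exact ⟨by omega, h2⟩
  have injB : ∀ i j i' j', 1 ≤ i → i ≤ K → 1 ≤ j → j ≤ R → 1 ≤ i' → i' ≤ K →
      1 ≤ j' → j' ≤ R →
      (2 * K - i) * R + σ i j = (2 * K - i') * R + σ i' j' → i = i' ∧ j = j' := by
    intro i j i' j' hi1 hi2 hj1 hj2 hi1' hi2' hj1' hj2' h
    obtain ⟨hs1, hs2⟩ := hσb i j hi1 hi2 hj1 hj2
    obtain ⟨hs1', hs2'⟩ := hσb i' j' hi1' hi2' hj1' hj2'
    obtain ⟨h1, h2⟩ := wilf_key R (2 * K - i) (σ i j) (2 * K - i') (σ i' j') hs1 hs2 hs1' hs2' h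
    have hii : i = i' := by omega
    subst hii
    exact ⟨rfl, hσinj i j j' hi1 hi2 hj1 hj2 hj1' hj2' h2⟩
  -- fixed point
  have hfix : IsFixedWilf S := by
    intro q hq
    rw [memS] at hq ⊢
    rcases hq with ⟨i, j, h1, h2, h3⟩ | ⟨i, j, h1, h2, h3⟩
    · exact Or.inr ⟨i, j, h1, h2, by rw [h3]⟩
    · exact Or.inl ⟨i, j, h1, h2, by rw [h3]⟩
  -- distinct first coordinates
  have hfirst : ∀ q ∈ S, ∀ q' ∈ S, q.1 = q'.1 → q = q' := by
    intro q hq q' hq' h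
    rw [memS] at hq hq'
    rcases hq with ⟨i, j, ⟨hi1, hi2⟩, ⟨hj1, hj2⟩, h3⟩ | ⟨i, j, ⟨hi1, hi2⟩, ⟨hj1, hj2⟩, h3⟩ <;>
      rcases hq' with ⟨i', j', ⟨hi1', hi2'⟩, ⟨hj1', hj2'⟩, h3'⟩ |
        ⟨i', j', ⟨hi1', hi2'⟩, ⟨hj1', hj2'⟩, h3'⟩ <;>
      subst h3 <;> subst h3' <;> simp only at h
    · -- A = A'
      obtain ⟨hAa, hAb⟩ := hA i j hi1 hi2 hj1 hj2
      obtain ⟨hAa', hAb'⟩ := hA i' j' hi1' hi2' hj1' hj2'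
      have he := injx _ _ hAa (le_trans hAb hKR2) hAa' (le_trans hAb' hKR2) h
      obtain ⟨e1, e2⟩ := injA i j i' j' hi1 hi2 hj1 hj2 hi1' hi2' hj1' hj2' he
      subst e1; subst e2; rfl
    · -- A = B' : impossible
      obtain ⟨hAa, hAb⟩ := hA i j hi1 hi2 hj1 hj2
      obtain ⟨hBa', hBb'⟩ := hB i' j' hi1' hi2' hj1' hj2'
      have he := injx _ _ hAa (le_trans hAb hKR2) (by omega) hBb' h
      omega
    · -- B = A' : impossible
      obtain ⟨hBa, hBb⟩ := hB i j hi1 hi2 hj1 hj2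
      obtain ⟨hAa', hAb'⟩ := hA i' j' hi1' hi2' hj1' hj2'
      have he := injx _ _ (by omega) hBb hAa' (le_trans hAb' hKR2) h
      omega
    · -- B = B'
      obtain ⟨hBa, hBb⟩ := hB i j hi1 hi2 hj1 hj2
      obtain ⟨hBa', hBb'⟩ := hB i' j' hi1' hi2' hj1' hj2'
      have he := injx _ _ (by omega) hBb (by omega) hBb' h
      obtain ⟨e1, e2⟩ := injB i j i' j' hi1 hi2 hj1 hj2 hi1' hi2' hj1' hj2' he
      subst e1; subst e2; rfl
  have hsecond : ∀ q ∈ S, ∀ q' ∈ S, q.2 = q'.2 → q = q' := by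
    intro q hq q' hq' h
    have := hfirst _ (hfix q hq) _ (hfix q' hq') h
    rw [Prod.ext_iff] at this ⊢
    exact ⟨this.2, this.1⟩
  have hpos : ∀ q ∈ S, 0 < q.1 ∧ 0 < q.2 := by
    intro q hq
    rw [memS] at hq
    rcases hq with ⟨i, j, ⟨hi1, hi2⟩, ⟨hj1, hj2⟩, h3⟩ | ⟨i, j, ⟨hi1, hi2⟩, ⟨hj1, hj2⟩, h3⟩ <;>
      subst h3 <;>
      obtain ⟨hAa, hAb⟩ := hA i j hi1 hi2 hj1 hj2 <;>
      obtain ⟨hBa, hBb⟩ := hB i j hi1 hi2 hj1 hj2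
    · exact ⟨hxpos _ hAa (le_trans hAb hKR2), hxpos _ (by omega) hBb⟩
    · exact ⟨hxpos _ (by omega) hBb, hxpos _ hAa (le_trans hAb hKR2)⟩
  exact ⟨⟨hpos, hfirst, hsecond, rfl⟩, hfix⟩
end

section
/- Let F(n) be the number of fixed points of the part-multiplicity involution on Wilf partitions of n. Then log F(n) ≥ (1/6)(6n)^{1/3} log n · (1 + o(1)) as n → ∞. -/
set_option maxHeartbeats 1000000

/-- The number of fixed points of the part-multiplicity involution on
Wilf partitions of `n`. -/
noncomputable def wilfFixedCount (n : ℕ) : ℕ :=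
  Nat.card {S : Finset (ℕ × ℕ) // IsWilfPartition n S ∧ IsFixedWilf S}

open Filter Real Finset

namespace WilfProof


/-- block permutation as a function on ℕ -/
def jf (w K : ℕ) (σ : Fin K → Equiv.Perm (Fin w)) (i : ℕ) : ℕ :=
  if h : i / w < K ∧ i % w < w then (i / w) * w + ((σ ⟨i / w, h.1⟩) ⟨i % w, h.2⟩ : ℕ) else i

/-- inverse block permutation -/
def jg (w K : ℕ) (σ : Fin K → Equiv.Perm (Fin w)) (i : ℕ) : ℕ :=
  if h : i / w < K ∧ i % w < w then (i / w) * w + (((σ ⟨i / w, h.1⟩).symm) ⟨i % w, h.2⟩ : ℕ) else i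

variable {w K : ℕ} (σ : Fin K → Equiv.Perm (Fin w))

lemma div_mul_add (hw : 0 < w) {t s : ℕ} (ht : t < K) (hs : s < w) :
    (t * w + s) / w = t ∧ (t * w + s) % w = s := by
  constructor
  · rw [mul_comm, Nat.mul_add_div hw, Nat.div_eq_of_lt hs]; omega
  · rw [mul_comm, Nat.mul_add_mod, Nat.mod_eq_of_lt hs]

lemma jf_apply (hw : 0 < w) {t s : ℕ} (ht : t < K) (hs : s < w) :
    jf w K σ (t * w + s) = t * w + (σ ⟨t, ht⟩ ⟨s, hs⟩ : ℕ) := by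
  obtain ⟨h1, h2⟩ := div_mul_add (K := K) hw ht hs
  unfold jf
  rw [dif_pos (by rw [h1, h2]; exact ⟨ht, hs⟩)]
  congr 1
  · rw [h1]
  · congr 1 <;> simp [h1, h2]

lemma jg_apply (hw : 0 < w) {t s : ℕ} (ht : t < K) (hs : s < w) :
    jg w K σ (t * w + s) = t * w + ((σ ⟨t, ht⟩).symm ⟨s, hs⟩ : ℕ) := by
  obtain ⟨h1, h2⟩ := div_mul_add (K := K) hw ht hs
  unfold jg
  rw [dif_pos (by rw [h1, h2]; exact ⟨ht, hs⟩)]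
  congr 1
  · rw [h1]
  · congr 1 <;> simp [h1, h2]

lemma exists_ts (hw : 0 < w) {i : ℕ} (hi : i < K * w) :
    ∃ t s, t < K ∧ s < w ∧ i = t * w + s := by
  have h2 := Nat.div_add_mod i w
  have h3 : i / w * w = w * (i / w) := Nat.mul_comm _ _
  refine ⟨i / w, i % w, (Nat.div_lt_iff_lt_mul hw).2 (by omega), Nat.mod_lt _ hw, by omega⟩

lemma jf_lt (hw : 0 < w) {i : ℕ} (hi : i < K * w) : jf w K σ i < K * w := by
  obtain ⟨t, s, ht, hs, rfl⟩ := exists_ts hw hi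
  rw [jf_apply σ hw ht hs]
  have : (σ ⟨t, ht⟩ ⟨s, hs⟩ : ℕ) < w := (σ ⟨t, ht⟩ ⟨s, hs⟩).2
  calc t * w + (σ ⟨t, ht⟩ ⟨s, hs⟩ : ℕ) < t * w + w := by omega
  _ = (t+1) * w := by ring
  _ ≤ K * w := Nat.mul_le_mul_right _ (by omega)

lemma jg_lt (hw : 0 < w) {i : ℕ} (hi : i < K * w) : jg w K σ i < K * w := by
  obtain ⟨t, s, ht, hs, rfl⟩ := exists_ts hw hi
  rw [jg_apply σ hw ht hs]
  have : ((σ ⟨t, ht⟩).symm ⟨s, hs⟩ : ℕ) < w := ((σ ⟨t, ht⟩).symm ⟨s, hs⟩).2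
  calc t * w + ((σ ⟨t, ht⟩).symm ⟨s, hs⟩ : ℕ) < t * w + w := by omega
  _ = (t+1) * w := by ring
  _ ≤ K * w := Nat.mul_le_mul_right _ (by omega)

lemma jg_jf (hw : 0 < w) {i : ℕ} (hi : i < K * w) : jg w K σ (jf w K σ i) = i := by
  obtain ⟨t, s, ht, hs, rfl⟩ := exists_ts hw hi
  rw [jf_apply σ hw ht hs]
  have hv : (σ ⟨t, ht⟩ ⟨s, hs⟩ : ℕ) < w := (σ ⟨t, ht⟩ ⟨s, hs⟩).2
  rw [jg_apply σ hw ht hv]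
  congr 1
  have : (⟨(σ ⟨t, ht⟩ ⟨s, hs⟩ : ℕ), hv⟩ : Fin w) = σ ⟨t, ht⟩ ⟨s, hs⟩ := by
    apply Fin.ext; rfl
  rw [this, Equiv.symm_apply_apply]

lemma jf_jg (hw : 0 < w) {i : ℕ} (hi : i < K * w) : jf w K σ (jg w K σ i) = i := by
  obtain ⟨t, s, ht, hs, rfl⟩ := exists_ts hw hi
  rw [jg_apply σ hw ht hs]
  have hv : ((σ ⟨t, ht⟩).symm ⟨s, hs⟩ : ℕ) < w := ((σ ⟨t, ht⟩).symm ⟨s, hs⟩).2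
  rw [jf_apply σ hw ht hv]
  congr 1
  have : (⟨((σ ⟨t, ht⟩).symm ⟨s, hs⟩ : ℕ), hv⟩ : Fin w) = (σ ⟨t, ht⟩).symm ⟨s, hs⟩ := by
    apply Fin.ext; rfl
  rw [this, Equiv.apply_symm_apply]

lemma jf_ge (hw : 0 < w) {i : ℕ} (hi : i < K * w) : i / w * w ≤ jf w K σ i := by
  obtain ⟨t, s, ht, hs, rfl⟩ := exists_ts hw hi
  obtain ⟨h1, h2⟩ := div_mul_add (K := K) hw ht hs
  rw [jf_apply σ hw ht hs, h1]
  omega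

lemma jf_gt (hw : 0 < w) {i : ℕ} (hi : i < K * w) : i + 1 ≤ jf w K σ i + w := by
  have h1 := jf_ge σ hw hi
  have h2 := Nat.div_add_mod i w
  have h3 : i % w < w := Nat.mod_lt _ hw
  have h4 : i / w * w = w * (i / w) := Nat.mul_comm _ _
  omega




def AA (w K : ℕ) (σ : Fin K → Equiv.Perm (Fin w)) : ℕ :=
  ∑ i ∈ range (K*w), (i+3) * (2*(K*w)+2 - jf w K σ i)

def rr (n w K : ℕ) (σ : Fin K → Equiv.Perm (Fin w)) : ℕ :=
  (n - if Odd n then (2*(K*w)+3)^2 else 0)/2 - AA w K σ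

def pf (n w K : ℕ) (σ : Fin K → Equiv.Perm (Fin w)) (v : ℕ) : ℕ :=
  if v = 1 then rr n w K σ
  else if v = rr n w K σ then 1
  else if 3 ≤ v ∧ v ≤ K*w+2 then 2*(K*w)+2 - jf w K σ (v-3)
  else if K*w+3 ≤ v ∧ v ≤ 2*(K*w)+2 then jg w K σ (2*(K*w)+2 - v) + 3
  else v

def VV (n w K : ℕ) (σ : Fin K → Equiv.Perm (Fin w)) : Finset ℕ :=
  insert 1 (insert (rr n w K σ) (Icc 3 (2*(K*w)+2))) ∪ (if Odd n then {2*(K*w)+3} else ∅)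

def SS (n w K : ℕ) (σ : Fin K → Equiv.Perm (Fin w)) : Finset (ℕ × ℕ) :=
  (VV n w K σ).image (fun v => (v, pf n w K σ v))

variable {n w K : ℕ} {σ : Fin K → Equiv.Perm (Fin w)}

lemma mem_VV {v : ℕ} : v ∈ VV n w K σ ↔
    v = 1 ∨ v = rr n w K σ ∨ (3 ≤ v ∧ v ≤ 2*(K*w)+2) ∨ (Odd n ∧ v = 2*(K*w)+3) := by
  unfold VV
  by_cases h : Odd n <;> simp [h, mem_Icc] <;> tauto

section
variable (hw : 0 < w) (Hr : 2*(K*w) + 4 ≤ rr n w K σ)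
include Hr

lemma pf_one : pf n w K σ 1 = rr n w K σ := by simp [pf]

lemma pf_rr : pf n w K σ (rr n w K σ) = 1 := by
  unfold pf
  rw [if_neg (by omega), if_pos rfl]

lemma pf_lo {i : ℕ} (hi : i < K*w) : pf n w K σ (i+3) = 2*(K*w)+2 - jf w K σ i := by
  unfold pf
  rw [if_neg (by omega), if_neg (by omega), if_pos (by omega)]
  norm_num

lemma pf_hi {v : ℕ} (hv1 : K*w+3 ≤ v) (hv2 : v ≤ 2*(K*w)+2) :
    pf n w K σ v = jg w K σ (2*(K*w)+2 - v) + 3 := by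
  unfold pf
  rw [if_neg (by omega), if_neg (by omega), if_neg (by omega), if_pos (by omega)]

lemma pf_q : pf n w K σ (2*(K*w)+3) = 2*(K*w)+3 := by
  unfold pf
  rw [if_neg (by omega), if_neg (by omega), if_neg (by omega), if_neg (by omega)]

include hw

lemma pf_lo_mem {i : ℕ} (hi : i < K*w) :
    K*w+3 ≤ pf n w K σ (i+3) ∧ pf n w K σ (i+3) ≤ 2*(K*w)+2 := by
  rw [pf_lo Hr hi]
  have := jf_lt σ hw hi
  omega

lemma pf_hi_mem {v : ℕ} (hv1 : K*w+3 ≤ v) (hv2 : v ≤ 2*(K*w)+2) :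
    3 ≤ pf n w K σ v ∧ pf n w K σ v ≤ K*w+2 := by
  rw [pf_hi Hr hv1 hv2]
  have : 2*(K*w)+2-v < K*w := by omega
  have := jg_lt σ hw this
  omega

lemma pf_mem_VV {v : ℕ} (hv : v ∈ VV n w K σ) : pf n w K σ v ∈ VV n w K σ := by
  rw [mem_VV] at hv ⊢
  rcases hv with rfl | rfl | ⟨h3, h2⟩ | ⟨ho, rfl⟩
  · rw [pf_one Hr]; tauto
  · rw [pf_rr Hr]; tauto
  · by_cases hc : v ≤ K*w+2
    · obtain ⟨a, b⟩ := pf_lo_mem hw (Hr := Hr) (i := v-3) (by omega)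
      have hv3 : v - 3 + 3 = v := by omega
      rw [hv3] at a b
      omega
    · obtain ⟨a, b⟩ := pf_hi_mem hw Hr (by omega) h2
      omega
  · rw [pf_q Hr]; tauto

lemma pf_invol {v : ℕ} (hv : v ∈ VV n w K σ) : pf n w K σ (pf n w K σ v) = v := by
  rw [mem_VV] at hv
  rcases hv with rfl | rfl | ⟨h3, h2⟩ | ⟨ho, rfl⟩
  · rw [pf_one Hr, pf_rr Hr]
  · rw [pf_rr Hr, pf_one Hr]
  · by_cases hc : v ≤ K*w+2
    · have hi : v - 3 < K*w := by omega
      have hv3 : v - 3 + 3 = v := by omega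
      rw [← hv3, pf_lo Hr hi]
      have h1 := jf_lt σ hw hi
      rw [pf_hi Hr (by omega) (by omega)]
      have h4 : 2*(K*w)+2 - (2*(K*w)+2 - jf w K σ (v-3)) = jf w K σ (v-3) := by omega
      rw [h4, jg_jf σ hw hi]
    · rw [pf_hi Hr (by omega) h2]
      have hlt : 2*(K*w)+2-v < K*w := by omega
      have h1 := jg_lt σ hw hlt
      rw [pf_lo Hr (by omega), jf_jg σ hw hlt]
      omega
  · rw [pf_q Hr, pf_q Hr]

lemma pf_inj {v v' : ℕ} (hv : v ∈ VV n w K σ) (hv' : v' ∈ VV n w K σ)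
    (h : pf n w K σ v = pf n w K σ v') : v = v' := by
  have := pf_invol hw Hr hv
  have := pf_invol hw Hr hv'
  rw [← pf_invol hw Hr hv, h, pf_invol hw Hr hv']

lemma pf_pos {v : ℕ} (hv : v ∈ VV n w K σ) : 0 < v ∧ 0 < pf n w K σ v := by
  have h1 : 0 < v := by rw [mem_VV] at hv; rcases hv with rfl|rfl|h|h <;> omega
  have h2 := pf_mem_VV hw Hr hv
  rw [mem_VV] at h2
  constructor
  · exact h1
  · rcases h2 with h|h|h|h <;> omega

end




variable {n w K : ℕ} {σ : Fin K → Equiv.Perm (Fin w)}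

lemma sum_sq (m : ℕ) : 6 * (∑ k ∈ range m, k^2) + 3*m^2 = 2*m^3 + m := by
  induction m with
  | zero => simp
  | succ m ih =>
    rw [Finset.sum_range_succ]
    ring_nf
    ring_nf at ih
    nlinarith [ih]

lemma AB_identity (m w : ℕ) :
    (∑ k ∈ range m, (m+2-k)*(m+2+w+k)) + w*(∑ k ∈ range m, k) + (∑ k ∈ range m, k^2)
      = m*((m+2)*(m+2+w)) := by
  have h : ∀ k ∈ range m, (m+2-k)*(m+2+w+k) + w*k + k^2 = (m+2)*(m+2+w) := by
    intro k hk
    rw [mem_range] at hk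
    zify [show k ≤ m+2 by omega]
    ring
  calc (∑ k ∈ range m, (m+2-k)*(m+2+w+k)) + w*(∑ k ∈ range m, k) + (∑ k ∈ range m, k^2)
      = ∑ k ∈ range m, ((m+2-k)*(m+2+w+k) + w*k + k^2) := by
        rw [Finset.sum_add_distrib, Finset.sum_add_distrib, Finset.mul_sum]
    _ = ∑ _k ∈ range m, (m+2)*(m+2+w) := Finset.sum_congr rfl h
    _ = m*((m+2)*(m+2+w)) := by rw [Finset.sum_const, card_range, smul_eq_mul]

lemma AA_le {w K : ℕ} (σ : Fin K → Equiv.Perm (Fin w)) (hw : 0 < w) :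
    AA w K σ ≤ ∑ k ∈ range (K*w), ((K*w)+2-k)*((K*w)+2+w+k) := by
  unfold AA
  have step1 : AA w K σ ≤ ∑ i ∈ range (K*w), (i+3) * (2*(K*w)+1+w-i) := by
    apply Finset.sum_le_sum
    intro i hi
    rw [mem_range] at hi
    apply Nat.mul_le_mul_left
    have := jf_gt σ hw hi
    omega
  refine le_trans step1 (le_of_eq ?_)
  rw [← Finset.sum_range_reflect (fun i => (i+3) * (2*(K*w)+1+w-i)) (K*w)]
  apply Finset.sum_congr rfl
  intro k hk
  rw [mem_range] at hk
  have h1 : (K*w) - 1 - k + 3 = (K*w)+2-k := by omega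
  have h2 : 2*(K*w)+1+w-((K*w)-1-k) = (K*w)+2+w+k := by omega
  rw [h1, h2]

lemma AA_bound {n w K : ℕ} (σ : Fin K → Equiv.Perm (Fin w)) (hw : 0 < w)
    (HH : 4*(K*w)^3 + w*(3*(K*w)^2+15*(K*w)) + 39*(K*w)^2 + 71*(K*w) + 51 ≤ 3*n) :
    2*(AA w K σ) + (2*(K*w)+3)^2 + 4*(K*w) + 8 ≤ n := by
  set m := K*w with hm
  have h1 := AA_le σ hw
  have h2 := AB_identity m w
  have h3 := sum_sq m
  have h4 := Finset.sum_range_id_mul_two m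
  rw [← hm] at h1
  set AB := ∑ k ∈ range m, (m+2-k)*(m+2+w+k) with hAB
  set S1 := ∑ k ∈ range m, k with hS1
  set S2 := ∑ k ∈ range m, k^2 with hS2
  have h4' : S1 * 2 + m = m * m := by
    rw [h4]
    cases m with
    | zero => simp
    | succ k => simp only [Nat.succ_sub_one]; ring
  have z2 : (AB:ℤ) + w*S1 + S2 = m*((m+2)*(m+2+w)) := by exact_mod_cast h2
  have z3 : 6*(S2:ℤ) + 3*(m:ℤ)^2 = 2*(m:ℤ)^3+m := by exact_mod_cast h3
  have z4 : (S1:ℤ)*2 + m = (m:ℤ)*m := by exact_mod_cast h4'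
  have z5 : 6*(AB:ℤ) = 4*(m:ℤ)^3+27*(m:ℤ)^2+23*m+w*(3*(m:ℤ)^2+15*m) := by
    linear_combination 6*z2 - 3*(w:ℤ)*z4 - z3
  have z1 : (AA w K σ : ℤ) ≤ (AB:ℤ) := by exact_mod_cast h1
  have zH : 4*(m:ℤ)^3 + w*(3*(m:ℤ)^2+15*m) + 39*(m:ℤ)^2 + 71*m + 51 ≤ 3*n := by exact_mod_cast HH
  zify
  nlinarith [z5, z1, zH]

lemma rr_ge {n w K : ℕ} (σ : Fin K → Equiv.Perm (Fin w)) (hw : 0 < w)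
    (HH : 4*(K*w)^3 + w*(3*(K*w)^2+15*(K*w)) + 39*(K*w)^2 + 71*(K*w) + 51 ≤ 3*n) :
    2*(K*w) + 4 ≤ rr n w K σ := by
  have h := AA_bound σ hw HH
  have hodd : Odd n ↔ n % 2 = 1 := Nat.odd_iff
  obtain ⟨y, hy⟩ : ∃ y, (2*(K*w)+3)^2 = 2*y+1 := ⟨2*(K*w)*(K*w)+6*(K*w)+4, by ring⟩
  unfold rr
  rw [hy] at h ⊢
  by_cases ho : Odd n
  · have ho' : n % 2 = 1 := hodd.mp ho
    rw [if_pos ho]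
    omega
  · have ho' : ¬ (n % 2 = 1) := fun hc => ho (hodd.mpr hc)
    rw [if_neg ho]
    omega

lemma rr_sum {n w K : ℕ} (σ : Fin K → Equiv.Perm (Fin w)) (hw : 0 < w)
    (HH : 4*(K*w)^3 + w*(3*(K*w)^2+15*(K*w)) + 39*(K*w)^2 + 71*(K*w) + 51 ≤ 3*n) :
    2*(rr n w K σ) + 2*(AA w K σ) + (if Odd n then (2*(K*w)+3)^2 else 0) = n := by
  have h := AA_bound σ hw HH
  have hodd : Odd n ↔ n % 2 = 1 := Nat.odd_iff
  obtain ⟨y, hy⟩ : ∃ y, (2*(K*w)+3)^2 = 2*y+1 := ⟨2*(K*w)*(K*w)+6*(K*w)+4, by ring⟩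
  unfold rr
  rw [hy] at h ⊢
  by_cases ho : Odd n
  · have ho' : n % 2 = 1 := hodd.mp ho
    rw [if_pos ho]
    omega
  · have ho' : ¬ (n % 2 = 1) := fun hc => ho (hodd.mpr hc)
    rw [if_neg ho]
    omega





lemma sum_lo (hw : 0 < w) (Hr : 2*(K*w) + 4 ≤ rr n w K σ) :
    ∑ v ∈ Icc 3 ((K*w)+2), v * pf n w K σ v = AA w K σ := by
  unfold AA
  apply Finset.sum_nbij' (fun v => v - 3) (fun i => i + 3)
  · intro a ha; rw [mem_Icc] at ha; rw [mem_range]; omega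
  · intro a ha; rw [mem_range] at ha; rw [mem_Icc]; omega
  · intro a ha; rw [mem_Icc] at ha; omega
  · intro a ha; omega
  · intro a ha
    rw [mem_Icc] at ha
    have h3 : a - 3 + 3 = a := by omega
    rw [← h3, pf_lo Hr (by omega)]
    simp only [h3]

lemma sum_hi (hw : 0 < w) (Hr : 2*(K*w) + 4 ≤ rr n w K σ) :
    ∑ v ∈ Icc ((K*w)+3) (2*(K*w)+2), v * pf n w K σ v = AA w K σ := by
  unfold AA
  apply Finset.sum_nbij' (fun v => jg w K σ (2*(K*w)+2 - v)) (fun i => 2*(K*w)+2 - jf w K σ i)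
  · intro a ha; rw [mem_Icc] at ha; rw [mem_range]
    exact jg_lt σ hw (by omega)
  · intro a ha; rw [mem_range] at ha; rw [mem_Icc]
    have := jf_lt σ hw ha
    omega
  · intro a ha; rw [mem_Icc] at ha
    rw [jf_jg σ hw (by omega)]
    omega
  · intro a ha; rw [mem_range] at ha
    have := jf_lt σ hw ha
    have h4 : 2*(K*w)+2 - (2*(K*w)+2 - jf w K σ a) = jf w K σ a := by omega
    rw [h4, jg_jf σ hw ha]
  · intro a ha; rw [mem_Icc] at ha
    rw [pf_hi Hr ha.1 ha.2, jf_jg σ hw (by omega)]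
    have h5 : 2*(K*w)+2 - (2*(K*w)+2-a) = a := by omega
    rw [h5]
    ring

lemma sum_VV (hw : 0 < w)
    (HH : 4*(K*w)^3 + w*(3*(K*w)^2+15*(K*w)) + 39*(K*w)^2 + 71*(K*w) + 51 ≤ 3*n) :
    ∑ v ∈ VV n w K σ, v * pf n w K σ v = n := by
  have Hr := rr_ge σ hw HH
  have hsplit : Icc 3 (2*(K*w)+2) = Icc 3 ((K*w)+2) ∪ Icc ((K*w)+3) (2*(K*w)+2) := by
    ext v; simp only [mem_Icc, mem_union]; omega
  have hdisj : Disjoint (Icc 3 ((K*w)+2)) (Icc ((K*w)+3) (2*(K*w)+2)) := by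
    simp only [disjoint_left, mem_Icc]; intro a h1 h2; omega
  have hIcc : ∑ v ∈ Icc 3 (2*(K*w)+2), v * pf n w K σ v = 2 * AA w K σ := by
    rw [hsplit, Finset.sum_union hdisj, sum_lo hw Hr, sum_hi hw Hr]
    ring
  have h1ni : (1:ℕ) ∉ insert (rr n w K σ) (Icc 3 (2*(K*w)+2)) := by
    simp only [mem_insert, mem_Icc]; omega
  have hrni : rr n w K σ ∉ Icc 3 (2*(K*w)+2) := by
    simp only [mem_Icc]; omega
  have hB : ∑ v ∈ insert 1 (insert (rr n w K σ) (Icc 3 (2*(K*w)+2))), v * pf n w K σ v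
      = 2 * rr n w K σ + 2 * AA w K σ := by
    rw [Finset.sum_insert h1ni, Finset.sum_insert hrni, hIcc, pf_one Hr, pf_rr Hr]
    ring
  have hsum := rr_sum σ hw HH
  unfold VV
  by_cases ho : Odd n
  · rw [if_pos ho]
    have hq : (2*(K*w)+3) ∉ insert 1 (insert (rr n w K σ) (Icc 3 (2*(K*w)+2))) := by
      simp only [mem_insert, mem_Icc]; omega
    rw [Finset.union_comm, ← Finset.insert_eq, Finset.sum_insert hq, hB, pf_q Hr]
    rw [if_pos ho] at hsum
    have : (2*(K*w)+3) * (2*(K*w)+3) = (2*(K*w)+3)^2 := by ring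
    omega
  · rw [if_neg ho, Finset.union_empty, hB]
    rw [if_neg ho] at hsum
    omega

lemma SS_wilf (hw : 0 < w)
    (HH : 4*(K*w)^3 + w*(3*(K*w)^2+15*(K*w)) + 39*(K*w)^2 + 71*(K*w) + 51 ≤ 3*n) :
    IsWilfPartition n (SS n w K σ) ∧ IsFixedWilf (SS n w K σ) := by
  have Hr := rr_ge σ hw HH
  refine ⟨⟨?_, ?_, ?_, ?_⟩, ?_⟩
  · rintro q hq
    obtain ⟨v, hv, rfl⟩ := Finset.mem_image.mp hq
    exact pf_pos hw Hr hv
  · rintro q hq q' hq' h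
    obtain ⟨v, hv, rfl⟩ := Finset.mem_image.mp hq
    obtain ⟨v', hv', rfl⟩ := Finset.mem_image.mp hq'
    simp only at h
    rw [h]
  · rintro q hq q' hq' h
    obtain ⟨v, hv, rfl⟩ := Finset.mem_image.mp hq
    obtain ⟨v', hv', rfl⟩ := Finset.mem_image.mp hq'
    simp only at h
    rw [pf_inj hw Hr hv hv' h]
  · unfold SS
    rw [Finset.sum_image (by intro v hv v' hv' h; exact congrArg Prod.fst h)]
    exact sum_VV hw HH
  · rintro q hq
    unfold SS at hq ⊢
    obtain ⟨v, hv, rfl⟩ := Finset.mem_image.mp hq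
    simp only
    rw [Finset.mem_image]
    exact ⟨pf n w K σ v, pf_mem_VV hw Hr hv, by rw [pf_invol hw Hr hv]⟩

lemma SS_inj (hw : 0 < w)
    (HH : 4*(K*w)^3 + w*(3*(K*w)^2+15*(K*w)) + 39*(K*w)^2 + 71*(K*w) + 51 ≤ 3*n) :
    Function.Injective (fun σ : Fin K → Equiv.Perm (Fin w) => SS n w K σ) := by
  intro σ σ' h
  funext t
  apply Equiv.ext
  intro s
  apply Fin.ext
  have Hr := rr_ge σ hw HH
  have Hr' := rr_ge σ' hw HH
  have hi : (t:ℕ)*w + (s:ℕ) < K*w := by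
    have ht := t.2; have hs := s.2
    calc (t:ℕ)*w + (s:ℕ) < (t:ℕ)*w + w := by omega
    _ = ((t:ℕ)+1)*w := by ring
    _ ≤ K*w := Nat.mul_le_mul_right _ (by omega)
  set i := (t:ℕ)*w + (s:ℕ) with hidef
  have hmem : (i+3) ∈ VV n w K σ := by rw [mem_VV]; right; right; left; omega
  have h' : SS n w K σ = SS n w K σ' := h
  have hin : ((i+3 : ℕ), pf n w K σ (i+3)) ∈ SS n w K σ' := by
    rw [← h']
    exact Finset.mem_image.mpr ⟨i+3, hmem, rfl⟩
  obtain ⟨u, hu, hequ⟩ := Finset.mem_image.mp hin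
  have hu1 : u = i + 3 := congrArg Prod.fst hequ
  subst hu1
  have hu2 : pf n w K σ' (i+3) = pf n w K σ (i+3) := congrArg Prod.snd hequ
  rw [pf_lo Hr' hi, pf_lo Hr hi] at hu2
  have hlt := jf_lt σ hw hi
  have hlt' := jf_lt σ' hw hi
  have hjf : jf w K σ i = jf w K σ' i := by omega
  rw [hidef] at hjf
  rw [jf_apply σ hw t.2 s.2, jf_apply σ' hw t.2 s.2] at hjf
  have := Nat.add_left_cancel hjf
  simpa using this

lemma wilf_finite (n : ℕ) : Finite {S : Finset (ℕ × ℕ) // IsWilfPartition n S ∧ IsFixedWilf S} := by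
  have hsub : {S : Finset (ℕ × ℕ) | IsWilfPartition n S ∧ IsFixedWilf S}
      ⊆ ↑((Icc 1 n ×ˢ Icc 1 n).powerset) := by
    intro S hS
    simp only [Set.mem_setOf_eq] at hS
    obtain ⟨⟨hpos, _, _, hsum⟩, _⟩ := hS
    simp only [Finset.mem_coe, Finset.mem_powerset]
    intro q hq
    have h1 := hpos q hq
    have h2 : q.1 * q.2 ≤ n := by
      rw [← hsum]
      exact Finset.single_le_sum (f := fun q : ℕ × ℕ => q.1*q.2) (fun _ _ => Nat.zero_le _) hq
    have h3 : q.1 ≤ n := le_trans (Nat.le_mul_of_pos_right _ h1.2) h2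
    have h4 : q.2 ≤ n := le_trans (Nat.le_mul_of_pos_left _ h1.1) h2
    rw [Finset.mem_product, Finset.mem_Icc, Finset.mem_Icc]
    omega
  have := Set.Finite.subset ((Icc 1 n ×ˢ Icc 1 n).powerset.finite_toSet) hsub
  exact this.to_subtype

lemma core_count (hw : 0 < w)
    (HH : 4*(K*w)^3 + w*(3*(K*w)^2+15*(K*w)) + 39*(K*w)^2 + 71*(K*w) + 51 ≤ 3*n) :
    Nat.factorial w ^ K ≤ wilfFixedCount n := by
  have hfin := wilf_finite n
  have hcard : Nat.card (Fin K → Equiv.Perm (Fin w)) = Nat.factorial w ^ K := by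
    rw [Nat.card_eq_fintype_card, Fintype.card_fun, Fintype.card_perm, Fintype.card_fin,
      Fintype.card_fin]
  rw [← hcard]
  exact Nat.card_le_card_of_injective
    (fun σ => (⟨SS n w K σ, SS_wilf hw HH⟩ :
      {S : Finset (ℕ × ℕ) // IsWilfPartition n S ∧ IsFixedWilf S}))
    (fun σ σ' h => SS_inj hw HH (congrArg Subtype.val h))



lemma pow_le_fact_mul_exp (w : ℕ) : (w:ℝ)^w ≤ (Nat.factorial w) * Real.exp w := by
  induction w with
  | zero => simp
  | succ k ih =>
    have hk : ((k:ℝ)+1)^k ≤ (k:ℝ)^k * Real.exp 1 := by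
      rcases Nat.eq_zero_or_pos k with rfl | hk0
      · norm_num
      · have hkpos : (0:ℝ) < k := by exact_mod_cast hk0
        have h1 : ((k:ℝ)+1)^k = (k:ℝ)^k * (1 + 1/k)^k := by
          rw [← mul_pow]
          congr 1
          field_simp
        rw [h1]
        apply mul_le_mul_of_nonneg_left _ (by positivity)
        have h2 : (1 + 1/(k:ℝ)) ≤ Real.exp (1/k) := by
          have := Real.add_one_le_exp (1/(k:ℝ))
          linarith
        calc (1 + 1/(k:ℝ))^k ≤ (Real.exp (1/k))^k := by
              apply pow_le_pow_left₀ (by positivity) h2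
          _ = Real.exp ((1/k) * k) := by rw [← Real.exp_nat_mul]; ring_nf
          _ ≤ Real.exp 1 := by
            apply Real.exp_le_exp.mpr
            rw [one_div, inv_mul_cancel₀ (ne_of_gt hkpos)]
    have hfact : (Nat.factorial (k+1) : ℝ) = ((k:ℝ)+1) * Nat.factorial k := by
      rw [Nat.factorial_succ]; push_cast; ring
    push_cast
    calc ((k:ℝ)+1)^(k+1) = ((k:ℝ)+1) * ((k:ℝ)+1)^k := by ring
      _ ≤ ((k:ℝ)+1) * ((k:ℝ)^k * Real.exp 1) := by
          apply mul_le_mul_of_nonneg_left hk (by positivity)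
      _ ≤ ((k:ℝ)+1) * ((Nat.factorial k * Real.exp k) * Real.exp 1) := by
          apply mul_le_mul_of_nonneg_left _ (by positivity)
          apply mul_le_mul_of_nonneg_right ih (Real.exp_pos 1).le
      _ = (Nat.factorial (k+1)) * (Real.exp k * Real.exp 1) := by rw [hfact]; ring
      _ = (Nat.factorial (k+1)) * Real.exp ((k:ℝ)+1) := by rw [← Real.exp_add]

lemma fact_lb (w : ℕ) : (w:ℝ) * (Real.log w - 1) ≤ Real.log (Nat.factorial w) := by
  rcases Nat.eq_zero_or_pos w with rfl | hw
  · simp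
  have h1 := pow_le_fact_mul_exp w
  have hwpos : (0:ℝ) < w := by exact_mod_cast hw
  have h2 : Real.log ((w:ℝ)^w) ≤ Real.log ((Nat.factorial w) * Real.exp w) :=
    Real.log_le_log (by positivity) h1
  rw [Real.log_pow, Real.log_mul (by positivity) (Real.exp_ne_zero _), Real.log_exp] at h2
  linarith

lemma HH_of {c L w m n : ℕ} (hL : 4 ≤ L) (hc : 100*L^2 ≤ c) (h4c : 4*c^3 ≤ 3*n)
    (hw : w = c/L^2+1) (hm : m ≤ c - c/L) :
    4*m^3 + w*(3*m^2+15*m) + 39*m^2 + 71*m + 51 ≤ 3*n := by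
  have hL0 : 0 < L := by omega
  have hL20 : 0 < L^2 := by positivity
  -- ℤ facts
  have zL : (4:ℤ) ≤ L := by exact_mod_cast hL
  have zc : (100:ℤ)*(L:ℤ)^2 ≤ c := by exact_mod_cast hc
  have z4c : (4:ℤ)*(c:ℤ)^3 ≤ 3*n := by exact_mod_cast h4c
  have hdiv : (L:ℤ) * ((c/L : ℕ):ℤ) + ((c % L : ℕ):ℤ) = c := by exact_mod_cast Nat.div_add_mod c L
  have hmod : ((c % L : ℕ):ℤ) < L := by exact_mod_cast Nat.mod_lt c hL0
  have hdiv2 : ((L^2 : ℕ):ℤ) * ((c/L^2 : ℕ):ℤ) + ((c % L^2 : ℕ):ℤ) = c := by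
    exact_mod_cast Nat.div_add_mod c (L^2)
  have hmod2 : (0:ℤ) ≤ ((c % L^2 : ℕ):ℤ) := by positivity
  have hcastL2 : ((L^2 : ℕ):ℤ) = (L:ℤ)^2 := by push_cast; ring
  set d : ℤ := ((c/L : ℕ):ℤ) with hd
  set u : ℤ := ((c/L^2 : ℕ):ℤ) with hu
  have zd1 : (L:ℤ)*d ≤ c := by linarith [hmod, hdiv, Int.natCast_nonneg (c % L)]
  have zd2 : (c:ℤ) < L*d + L := by linarith [hmod, hdiv]
  have zu1 : (L:ℤ)^2*u ≤ c := by rw [← hcastL2]; linarith [hdiv2, hmod2]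
  have zm : (m:ℤ) ≤ (c:ℤ) - d := by
    have h1 : (m:ℤ) ≤ ((c - c/L : ℕ) : ℤ) := by exact_mod_cast hm
    rw [Nat.cast_sub (Nat.div_le_self _ _)] at h1
    exact h1
  have zw : (w:ℤ) = u + 1 := by rw [hu]; exact_mod_cast hw
  have zm0 : (0:ℤ) ≤ m := by positivity
  have zd0 : (0:ℤ) ≤ d := by positivity
  have zu0 : (0:ℤ) ≤ u := by positivity
  have zc0 : (0:ℤ) ≤ c := by positivity
  have zdc : d ≤ (c:ℤ) := by linarith [zm0, zm]
  -- step B : 4(c-d)^3 + 4c^2 d ≤ 4 c^3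
  have stepB : 4*((c:ℤ)-d)^3 + 4*(c:ℤ)^2*d ≤ 4*(c:ℤ)^3 := by
    have hposp : (0:ℤ) ≤ (((c:ℤ)-d)*d)*(2*((c:ℤ)-d)+d) :=
      mul_nonneg (mul_nonneg (sub_nonneg.2 zdc) zd0) (by linarith)
    linarith [hposp]
  -- step A
  have stepA : 4*(m:ℤ)^3 ≤ 4*((c:ℤ)-d)^3 := by
    have h1 : (m:ℤ)^3 ≤ ((c:ℤ)-d)^3 := pow_le_pow_left₀ zm0 zm 3
    linarith
  -- step C : Q(m,w) ≤ 4 c^2 d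
  have stepC : (w:ℤ)*(3*(m:ℤ)^2+15*m) + 39*(m:ℤ)^2 + 71*m + 51 ≤ 4*(c:ℤ)^2*d := by
    have hmc' : (m:ℤ) ≤ c := by linarith
    have hw0 : (0:ℤ) ≤ w := by positivity
    have q1 : (m:ℤ)^2 ≤ (c:ℤ)^2 := pow_le_pow_left₀ zm0 hmc' 2
    have hQm : (w:ℤ)*(3*(m:ℤ)^2+15*m) + 39*(m:ℤ)^2 + 71*m + 51
        ≤ (w:ℤ)*(3*(c:ℤ)^2+15*c) + 39*(c:ℤ)^2 + 71*c + 51 := by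
      have q2 : (0:ℤ) ≤ (w:ℤ)*((3*(c:ℤ)^2+15*c) - (3*(m:ℤ)^2+15*m)) :=
        mul_nonneg hw0 (by linarith)
      linarith [q2, q1]
    have hc1600 : (1600:ℤ) ≤ c := by
      have h16 : (16:ℤ) ≤ (L:ℤ)^2 := by
        have := mul_le_mul_of_nonneg_left zL (by linarith : (0:ℤ) ≤ (L:ℤ))
        nlinarith [zL]
      linarith [zc, h16]
    -- auxiliary bounds
    have b1 : 100*((L:ℤ)^2*(c:ℤ)^2) ≤ (c:ℤ)^3 := by
      have h := mul_le_mul_of_nonneg_right zc (mul_nonneg zc0 zc0)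
      linarith [h]
    have b2 : 100*((L:ℤ)^2*(c:ℤ)) ≤ (c:ℤ)^2 := by
      have h := mul_le_mul_of_nonneg_right zc zc0
      linarith [h]
    have b3 : 100*((L:ℤ)^2) ≤ (c:ℤ) := zc
    have b4 : 16*(c:ℤ)^3 ≤ 4*(L:ℤ)*(c:ℤ)^3 := by
      have h := mul_nonneg (sub_nonneg.2 zL) (pow_nonneg zc0 3)
      linarith [h]
    have b5 : 17*(c:ℤ)^2 ≤ (c:ℤ)^3 := by
      have h := mul_le_mul_of_nonneg_right hc1600 (mul_nonneg zc0 zc0)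
      linarith [h, mul_nonneg zc0 zc0]
    have b6 : (c:ℤ) ≤ (c:ℤ)^2 := by
      have h := mul_le_mul_of_nonneg_right (by linarith : (1:ℤ) ≤ c) zc0
      linarith [h]
    have b7 : (0:ℤ) ≤ (L:ℤ)*(c:ℤ)^2 := by positivity
    have key : ((c:ℤ)+L^2)*(3*(c:ℤ)^2+15*c) + (L:ℤ)^2*(39*(c:ℤ)^2+71*c+51)
        ≤ 4*(c:ℤ)^2*(L:ℤ)*((c:ℤ) - L + 1) := by linarith [b1, b2, b3, b4, b5, b6, b7]
    have e1 : (L:ℤ)^2 * (w:ℤ) ≤ c + L^2 := by rw [zw]; linarith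
    have e3 : (c:ℤ) - L + 1 ≤ (L:ℤ)*d := by linarith
    have e4 : 4*(c:ℤ)^2*(L:ℤ)*((c:ℤ) - L + 1) ≤ 4*(c:ℤ)^2*(L:ℤ)*((L:ℤ)*d) := by
      apply mul_le_mul_of_nonneg_left e3
      positivity
    have e5 : (L:ℤ)^2 * ((w:ℤ)*(3*(c:ℤ)^2+15*c) + 39*(c:ℤ)^2 + 71*c + 51)
        ≤ ((c:ℤ)+L^2)*(3*(c:ℤ)^2+15*c) + (L:ℤ)^2*(39*(c:ℤ)^2+71*c+51) := by
      have e5a := mul_le_mul_of_nonneg_right e1 (by positivity : (0:ℤ) ≤ 3*(c:ℤ)^2+15*c)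
      linarith [e5a]
    have e6 : (L:ℤ)^2 * ((w:ℤ)*(3*(c:ℤ)^2+15*c) + 39*(c:ℤ)^2 + 71*c + 51)
        ≤ (L:ℤ)^2 * (4*(c:ℤ)^2*d) := by
      calc (L:ℤ)^2 * ((w:ℤ)*(3*(c:ℤ)^2+15*c) + 39*(c:ℤ)^2 + 71*c + 51)
          ≤ ((c:ℤ)+L^2)*(3*(c:ℤ)^2+15*c) + (L:ℤ)^2*(39*(c:ℤ)^2+71*c+51) := e5
        _ ≤ 4*(c:ℤ)^2*(L:ℤ)*((c:ℤ) - L + 1) := key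
        _ ≤ 4*(c:ℤ)^2*(L:ℤ)*((L:ℤ)*d) := e4
        _ = (L:ℤ)^2 * (4*(c:ℤ)^2*d) := by ring
    have hL2pos : (0:ℤ) < (L:ℤ)^2 := by positivity
    have := le_of_mul_le_mul_left e6 hL2pos
    linarith [hQm]
  have final : 4*(m:ℤ)^3 + (w:ℤ)*(3*(m:ℤ)^2+15*m) + 39*(m:ℤ)^2 + 71*m + 51 ≤ 3*(n:ℤ) := by
    linarith [stepA, stepB, stepC, z4c]
  exact_mod_cast final





noncomputable def xf (n : ℕ) : ℝ := ((3:ℝ)*n/4) ^ ((1:ℝ)/3)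
noncomputable def cf (n : ℕ) : ℕ := ⌊xf n⌋₊
def Lf (n : ℕ) : ℕ := Nat.log 2 n + 4
noncomputable def wfn (n : ℕ) : ℕ := cf n / (Lf n)^2 + 1
noncomputable def Kfn (n : ℕ) : ℕ := (cf n - cf n / Lf n) / wfn n
noncomputable def mfn (n : ℕ) : ℕ := Kfn n * wfn n

lemma xf_nonneg (n : ℕ) : 0 ≤ xf n := by unfold xf; positivity

lemma cf_le (n : ℕ) : (cf n : ℝ) ≤ xf n := Nat.floor_le (xf_nonneg n)

lemma lt_cf (n : ℕ) : xf n < cf n + 1 := Nat.lt_floor_add_one _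

lemma xf_eq (n : ℕ) : xf n = ((3:ℝ)/4)^((1:ℝ)/3) * (n:ℝ)^((1:ℝ)/3) := by
  unfold xf
  rw [← Real.mul_rpow (by norm_num) (by positivity)]
  congr 1
  ring

lemma h4c (n : ℕ) : 4*(cf n)^3 ≤ 3*n := by
  have h1 : (cf n : ℝ)^3 ≤ (xf n)^3 := by
    apply pow_le_pow_left₀ (by positivity) (cf_le n)
  have h2 : (xf n)^3 = 3*(n:ℝ)/4 := by
    unfold xf
    rw [← Real.rpow_natCast (((3:ℝ)*n/4) ^ ((1:ℝ)/3)) 3, ← Real.rpow_mul (by positivity)]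
    norm_num
  have h3 : (4:ℝ)*(cf n)^3 ≤ 3*n := by rw [h2] at h1; linarith
  exact_mod_cast h3

lemma mfn_le (n : ℕ) : mfn n ≤ cf n - cf n / Lf n := Nat.div_mul_le_self _ _

lemma Lf_ge : ∀ n, 4 ≤ Lf n := fun n => Nat.le_add_left 4 _

lemma wfn_pos (n : ℕ) : 0 < wfn n := Nat.succ_pos _

-- ℕ: mfn ≥ cf − 2 (cf/Lf) when 100 Lf² ≤ cf
lemma mfn_ge (n : ℕ) (h : 100*(Lf n)^2 ≤ cf n) : cf n - 2*(cf n / Lf n) ≤ mfn n := by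
  have hL : 4 ≤ Lf n := Lf_ge n
  have hL0 : 0 < Lf n := by omega
  have hw1 : (cf n / (Lf n)^2) * Lf n ≤ cf n / Lf n := by
    rw [Nat.le_div_iff_mul_le hL0]
    calc cf n / (Lf n)^2 * Lf n * Lf n = cf n / (Lf n)^2 * (Lf n)^2 := by ring
    _ ≤ cf n := Nat.div_mul_le_self _ _
  have hwle : wfn n ≤ cf n / Lf n := by
    show cf n / (Lf n)^2 + 1 ≤ cf n / Lf n
    rcases Nat.eq_zero_or_pos (cf n / (Lf n)^2) with h0 | h0
    · rw [h0] at hw1 ⊢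
      have h1 : (Lf n)^2 ≤ cf n := by nlinarith
      have h2 : 1 ≤ cf n / (Lf n)^2 := (Nat.one_le_div_iff (by positivity)).2 h1
      omega
    · have h4a : 4 * (cf n / (Lf n)^2) ≤ (cf n / (Lf n)^2) * Lf n := by
        rw [mul_comm]
        exact Nat.mul_le_mul_left _ hL
      omega
  have hmt : cf n - cf n / Lf n ≤ mfn n + wfn n := by
    unfold mfn Kfn
    have h5 := Nat.div_add_mod (cf n - cf n / Lf n) (wfn n)
    have hmod := Nat.mod_lt (cf n - cf n / Lf n) (wfn_pos n)
    have hcomm : (cf n - cf n / Lf n) / wfn n * wfn n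
        = wfn n * ((cf n - cf n / Lf n) / wfn n) := Nat.mul_comm _ _
    omega
  have hdivle : cf n / Lf n ≤ cf n := Nat.div_le_self _ _
  omega

-- core hypothesis holds when 100 Lf² ≤ cf
lemma HH_holds (n : ℕ) (h : 100*(Lf n)^2 ≤ cf n) :
    4*(Kfn n * wfn n)^3 + (wfn n)*(3*(Kfn n * wfn n)^2+15*(Kfn n * wfn n))
      + 39*(Kfn n * wfn n)^2 + 71*(Kfn n * wfn n) + 51 ≤ 3*n := by
  have := HH_of (c := cf n) (L := Lf n) (w := wfn n) (m := mfn n) (n := n)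
    (Lf_ge n) h (h4c n) rfl (mfn_le n)
  simpa [mfn] using this





noncomputable def c0 : ℝ := ((3:ℝ)/4)^((1:ℝ)/3)

lemma c0_pos : 0 < c0 := by unfold c0; positivity

lemma c0_le_one : c0 ≤ 1 := by
  unfold c0
  calc ((3:ℝ)/4)^((1:ℝ)/3) ≤ (1:ℝ)^((1:ℝ)/3) := by
        apply Real.rpow_le_rpow (by norm_num) (by norm_num) (by norm_num)
    _ = 1 := Real.one_rpow _

noncomputable def B1 (n : ℕ) : ℝ := (1 - 3/(Lf n : ℝ)) * (xf n - 2*c0)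
noncomputable def B2 (n : ℕ) : ℝ := (1/3)*Real.log n - 3*Real.log (Lf n) - 2

lemma TLnat : Tendsto (fun n => Nat.log 2 n) atTop atTop := by
  apply Filter.tendsto_atTop_atTop.mpr
  intro b
  exact ⟨2^b, fun n hn => Nat.le_log_of_pow_le one_lt_two hn⟩

lemma TL : Tendsto (fun n => (Lf n : ℝ)) atTop atTop := by
  apply tendsto_natCast_atTop_atTop.comp
  apply Filter.tendsto_atTop_atTop.mpr
  intro b
  obtain ⟨N, hN⟩ := Filter.tendsto_atTop_atTop.mp TLnat b
  exact ⟨N, fun n hn => le_trans (hN n hn) (by unfold Lf; omega)⟩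

lemma Tlogn : Tendsto (fun n : ℕ => Real.log n) atTop atTop :=
  Real.tendsto_log_atTop.comp tendsto_natCast_atTop_atTop

lemma Tn13 : Tendsto (fun n : ℕ => (n:ℝ)^((1:ℝ)/3)) atTop atTop :=
  (tendsto_rpow_atTop (by norm_num)).comp tendsto_natCast_atTop_atTop

lemma Txf : Tendsto xf atTop atTop := by
  have h := Tn13.const_mul_atTop c0_pos
  apply h.congr
  intro n
  rw [xf_eq]
  rfl

lemma EV_Lf_le : ∀ᶠ n : ℕ in atTop, (Lf n : ℝ) ≤ 3*Real.log n := by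
  filter_upwards [Tlogn.eventually_ge_atTop 4, eventually_ge_atTop 1] with n h4 h1
  have hpow : (2:ℕ)^(Nat.log 2 n) ≤ n := Nat.pow_log_le_self 2 (by omega)
  have hpowR : (2:ℝ)^(Nat.log 2 n : ℕ) ≤ (n:ℝ) := by exact_mod_cast hpow
  have hlog2 : (Nat.log 2 n : ℝ) * Real.log 2 ≤ Real.log n := by
    calc (Nat.log 2 n : ℝ) * Real.log 2 = Real.log ((2:ℝ)^(Nat.log 2 n : ℕ)) := by
          rw [Real.log_pow]
      _ ≤ Real.log n := Real.log_le_log (by positivity) hpowR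
  have h2 : (0.6931471803 : ℝ) < Real.log 2 := Real.log_two_gt_d9
  have hl : (Nat.log 2 n : ℝ) ≤ 2 * Real.log n := by
    nlinarith [Nat.cast_nonneg (Nat.log 2 n) (α := ℝ)]
  have : (Lf n : ℝ) = (Nat.log 2 n : ℝ) + 4 := by unfold Lf; push_cast; ring
  linarith

lemma T_sq_log : Tendsto (fun n : ℕ => (Real.log n)^2 / (n:ℝ)^((1:ℝ)/3)) atTop (nhds 0) := by
  have h := (isLittleO_log_rpow_rpow_atTop 2 (show (0:ℝ) < 1/3 by norm_num))
  have h2 : (fun x : ℝ => Real.log x ^ (2:ℝ)) = (fun x : ℝ => (Real.log x)^(2:ℕ)) := by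
    funext x
    rw [show ((2:ℝ) = ((2:ℕ):ℝ)) by norm_num, Real.rpow_natCast]
  rw [h2] at h
  have h3 := h.tendsto_div_nhds_zero
  exact h3.comp tendsto_natCast_atTop_atTop

lemma EV_cf : ∀ᶠ n : ℕ in atTop, 100*(Lf n)^2 ≤ cf n := by
  filter_upwards [EV_Lf_le, T_sq_log.eventually_lt_const (show (0:ℝ) < c0/1000 from div_pos c0_pos (by norm_num)),
    Tn13.eventually_ge_atTop (1000/c0), eventually_ge_atTop 1] with n h1 h2 h3 h4
  have hn13 : (0:ℝ) < (n:ℝ)^((1:ℝ)/3) := by positivity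
  have hlog0 : (0 : ℝ) ≤ Real.log n := Real.log_natCast_nonneg n
  have hL0 : (0:ℝ) ≤ (Lf n : ℝ) := by positivity
  -- 100 Lf² ≤ 900 log² ≤ (9/10) c0 n^{1/3} ≤ x − 1 ≤ cf
  have e1 : (100:ℝ)*(Lf n)^2 ≤ 900 * (Real.log n)^2 := by nlinarith
  have e2 : (Real.log n)^2 ≤ (c0/1000) * (n:ℝ)^((1:ℝ)/3) := by
    rw [div_lt_iff₀ hn13] at h2
    linarith
  have e3 : (1:ℝ) ≤ (c0/1000) * (n:ℝ)^((1:ℝ)/3) := by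
    have hc0d : (0:ℝ) < c0/1000 := div_pos c0_pos (by norm_num)
    have hmul := mul_le_mul_of_nonneg_left h3 hc0d.le
    have hid : (c0/1000)*(1000/c0) = 1 := by
      field_simp [c0_pos.ne']
    linarith [hmul, hid.symm.le]
  have e4 : (900:ℝ)*(c0/1000)*(n:ℝ)^((1:ℝ)/3) + (c0/1000)*(n:ℝ)^((1:ℝ)/3)
      ≤ c0 * (n:ℝ)^((1:ℝ)/3) := by nlinarith [c0_pos.le]
  have e5 : c0 * (n:ℝ)^((1:ℝ)/3) = xf n := (xf_eq n).symm
  have e6 : xf n - 1 ≤ (cf n : ℝ) := by linarith [lt_cf n]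
  have main : (100:ℝ)*(Lf n)^2 ≤ (cf n : ℝ) := by nlinarith
  exact_mod_cast main





lemma Lf_real_pos (n : ℕ) : (0:ℝ) < (Lf n : ℝ) := by
  have h := Lf_ge n
  have h2 : (4:ℝ) ≤ (Lf n : ℝ) := by exact_mod_cast h
  linarith

lemma Lf_real_ge (n : ℕ) : (4:ℝ) ≤ (Lf n : ℝ) := by exact_mod_cast Lf_ge n

lemma EV_xl : ∀ᶠ n : ℕ in atTop, (Lf n : ℝ) ≤ xf n := by
  filter_upwards [EV_Lf_le, T_sq_log.eventually_lt_const
      (show (0:ℝ) < c0/1000 from div_pos c0_pos (by norm_num)),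
    Tlogn.eventually_ge_atTop 1, eventually_ge_atTop 1] with n hLle h2 hlog1 hn1
  have hn13 : (0:ℝ) < (n:ℝ)^((1:ℝ)/3) := by positivity
  have e2 : (Real.log n)^2 ≤ (c0/1000) * (n:ℝ)^((1:ℝ)/3) := by
    rw [div_lt_iff₀ hn13] at h2
    linarith
  have e3 : Real.log n ≤ (Real.log n)^2 := by nlinarith
  have e5 : c0 * (n:ℝ)^((1:ℝ)/3) = xf n := (xf_eq n).symm
  nlinarith [c0_pos]

lemma EV_B1 : ∀ᶠ n : ℕ in atTop, 0 ≤ B1 n ∧ B1 n ≤ (mfn n : ℝ) := by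
  filter_upwards [EV_cf, Txf.eventually_ge_atTop 2, EV_xl] with n hcf hx2 hxl
  have hl : (0:ℝ) < (Lf n : ℝ) := Lf_real_pos n
  have h3l : 3/(Lf n:ℝ) ≤ 1 := by
    rw [div_le_one hl]; linarith [Lf_real_ge n]
  have hfac : (0:ℝ) ≤ 1 - 3/(Lf n:ℝ) := by linarith
  have hB1nn : 0 ≤ B1 n := by
    apply mul_nonneg hfac
    have := c0_le_one
    linarith
  refine ⟨hB1nn, ?_⟩
  have hu : (1:ℝ) ≤ xf n / (Lf n:ℝ) := (one_le_div hl).2 hxl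
  have hcf1 : xf n - 1 ≤ (cf n:ℝ) := by linarith [lt_cf n]
  have hcfx : (cf n:ℝ) ≤ xf n := cf_le n
  have hsubN : 2*(cf n / Lf n) ≤ cf n := by
    have h1 : (cf n / Lf n) * Lf n ≤ cf n := Nat.div_mul_le_self _ _
    have h2 : 2*(cf n / Lf n) ≤ (cf n / Lf n) * Lf n := by
      rw [mul_comm]
      exact Nat.mul_le_mul_left _ (by linarith [Lf_ge n] : 2 ≤ Lf n)
    omega
  have hmge := mfn_ge n hcf
  have hmR : (cf n : ℝ) - 2*((cf n / Lf n : ℕ):ℝ) ≤ (mfn n : ℝ) := by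
    have := (Nat.cast_le (α := ℝ)).2 hmge
    rw [Nat.cast_sub hsubN] at this
    push_cast at this ⊢
    linarith
  have hdivcast : ((cf n / Lf n : ℕ):ℝ) ≤ (cf n:ℝ)/(Lf n:ℝ) := Nat.cast_div_le
  have hdivle : (cf n:ℝ)/(Lf n:ℝ) ≤ xf n/(Lf n:ℝ) := by gcongr
  have hB1ub : B1 n ≤ (1 - 3/(Lf n:ℝ)) * xf n := by
    apply mul_le_mul_of_nonneg_left _ hfac
    linarith [c0_pos]
  have hexp : (1 - 3/(Lf n:ℝ)) * xf n = xf n - 3*(xf n/(Lf n:ℝ)) := by ring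
  linarith

lemma T3 : Tendsto (fun n : ℕ => (3*Real.log (Lf n) + 2)/Real.log n) atTop (nhds 0) := by
  have h1 : Tendsto (fun n : ℕ => (3*Real.log 3 + 2)/Real.log n) atTop (nhds 0) :=
    Tendsto.const_div_atTop Tlogn _
  have h2 : Tendsto (fun n : ℕ => Real.log (Real.log n)/Real.log n) atTop (nhds 0) :=
    (Real.isLittleO_log_id_atTop.tendsto_div_nhds_zero).comp Tlogn
  have h3 := h1.add (h2.const_mul 3)
  norm_num at h3
  have hg : Tendsto (fun n : ℕ => (3*(Real.log 3 + Real.log (Real.log n)) + 2)/Real.log n)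
      atTop (nhds 0) := by
    apply h3.congr
    intro n
    ring
  apply squeeze_zero' _ _ hg
  · apply Filter.Eventually.of_forall
    intro n
    apply div_nonneg _ (Real.log_natCast_nonneg n)
    have := Real.log_natCast_nonneg (Lf n)
    linarith
  · filter_upwards [EV_Lf_le, Tlogn.eventually_ge_atTop 1] with n hLle hlog1
    have hlogn0 : (0:ℝ) < Real.log n := by linarith
    have hnum : Real.log (Lf n) ≤ Real.log 3 + Real.log (Real.log n) := by
      have hstep : Real.log (Lf n) ≤ Real.log (3 * Real.log n) :=
        Real.log_le_log (Lf_real_pos n) hLle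
      rwa [Real.log_mul (by norm_num) (by linarith)] at hstep
    gcongr

lemma EV_B2 : ∀ᶠ n : ℕ in atTop,
    0 ≤ B2 n ∧ B2 n ≤ Real.log (wfn n) - 1 := by
  filter_upwards [EV_cf, Tlogn.eventually_ge_atTop 1, eventually_ge_atTop 1,
    Txf.eventually_ge_atTop 2, T3.eventually_lt_const (show (0:ℝ) < 1/3 by norm_num)]
    with n hcf hlog1 hn1 hx2 hT3
  have hl : (0:ℝ) < (Lf n : ℝ) := Lf_real_pos n
  have hl4 : (4:ℝ) ≤ (Lf n : ℝ) := Lf_real_ge n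
  have hlogn0 : (0:ℝ) < Real.log n := by linarith
  constructor
  · rw [div_lt_iff₀ hlogn0] at hT3
    unfold B2
    linarith
  · have hcf1 : 1 ≤ cf n := by nlinarith [Lf_ge n, hcf]
    have hcfpos : (0:ℝ) < (cf n : ℝ) := by exact_mod_cast hcf1
    have hl2 : (0:ℝ) < (Lf n : ℝ)^2 := by positivity
    have hwfn : (cf n:ℝ)/((Lf n:ℝ)^2) < (wfn n : ℝ) := by
      have hN : cf n < (cf n / (Lf n)^2 + 1) * (Lf n)^2 := by
        have h5 := Nat.div_add_mod (cf n) ((Lf n)^2)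
        have h6 := Nat.mod_lt (cf n) (pow_pos (show 0 < Lf n by have := Lf_ge n; omega) 2)
        have h7 : (cf n / (Lf n)^2 + 1) * (Lf n)^2
            = (Lf n)^2 * (cf n / (Lf n)^2) + (Lf n)^2 := by ring
        omega
      have hR : (cf n:ℝ) < ((cf n / (Lf n)^2 + 1 : ℕ):ℝ) * ((Lf n :ℝ)^2) := by
        exact_mod_cast hN
      rw [div_lt_iff₀ hl2]
      exact_mod_cast hR
    have hwpos : (0:ℝ) < (cf n:ℝ)/((Lf n:ℝ)^2) := by positivity
    have hlogw : Real.log ((cf n:ℝ)/((Lf n:ℝ)^2)) ≤ Real.log (wfn n) :=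
      Real.log_le_log hwpos hwfn.le
    have hlogdiv : Real.log ((cf n:ℝ)/((Lf n:ℝ)^2))
        = Real.log (cf n) - 2*Real.log (Lf n) := by
      rw [Real.log_div (by positivity) (by positivity), Real.log_pow]
      push_cast
      ring
    have hcfx1 : xf n / 2 ≤ (cf n : ℝ) := by linarith [lt_cf n]
    have hxpos : (0:ℝ) < xf n := by linarith
    have hlogcf : Real.log (xf n / 2) ≤ Real.log (cf n) :=
      Real.log_le_log (by positivity) hcfx1
    have hlogx2 : Real.log (xf n / 2) = Real.log (xf n) - Real.log 2 :=
      Real.log_div (by positivity) (by norm_num)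
    have hnpos : (0:ℝ) < (n:ℝ) := by exact_mod_cast hn1
    have hlogx : Real.log (xf n) = (1/3) * Real.log (3*(n:ℝ)/4) := by
      unfold xf
      rw [Real.log_rpow (by positivity)]
    have hmono : Real.log ((n:ℝ)/2) ≤ Real.log (3*(n:ℝ)/4) :=
      Real.log_le_log (by positivity) (by linarith)
    have hlogn2 : Real.log ((n:ℝ)/2) = Real.log n - Real.log 2 :=
      Real.log_div (by positivity) (by norm_num)
    have hlog2 : Real.log 2 < 0.6931471808 := Real.log_two_lt_d9
    have hlog2pos : (0:ℝ) < Real.log 2 := Real.log_pos (by norm_num)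
    have hlogl1 : 1 ≤ Real.log (Lf n) := by
      rw [Real.le_log_iff_exp_le hl]
      linarith [Real.exp_one_lt_d9]
    unfold B2
    linarith

noncomputable def psi (n : ℕ) : ℝ :=
  (1 - 3/(Lf n:ℝ)) * (c0 - 2*c0/(n:ℝ)^((1:ℝ)/3))
    * ((1/3) - (3*Real.log (Lf n)+2)/Real.log n) * (6/(6:ℝ)^((1:ℝ)/3))

lemma c0_id : c0 * (1/3) * (6/(6:ℝ)^((1:ℝ)/3)) = 1 := by
  have h63 : (0:ℝ) < (6:ℝ)^((1:ℝ)/3) := by positivity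
  have hdiv : ((3:ℝ)/4)^((1:ℝ)/3) / (6:ℝ)^((1:ℝ)/3) = ((1:ℝ)/8)^((1:ℝ)/3) := by
    rw [← Real.div_rpow (by norm_num) (by norm_num)]
    norm_num
  have h2 : ((1:ℝ)/8)^((1:ℝ)/3) = 1/2 := by
    rw [show (1/8:ℝ) = (1/2:ℝ)^(3:ℕ) by norm_num, ← Real.rpow_natCast ((1/2:ℝ)) 3,
      ← Real.rpow_mul (by norm_num)]
    norm_num
  have : c0 / (6:ℝ)^((1:ℝ)/3) = 1/2 := by
    unfold c0
    rw [hdiv, h2]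
  calc c0 * (1/3) * (6/(6:ℝ)^((1:ℝ)/3)) = (c0/(6:ℝ)^((1:ℝ)/3)) * 2 := by ring
    _ = 1 := by rw [this]; norm_num

lemma Tpsi : Tendsto psi atTop (nhds 1) := by
  have T1 : Tendsto (fun n : ℕ => 1 - 3/(Lf n:ℝ)) atTop (nhds 1) := by
    have := Tendsto.const_div_atTop TL (3:ℝ)
    have h := tendsto_const_nhds (x := (1:ℝ)) (f := atTop (α := ℕ)) |>.sub this
    simpa using h
  have T2 : Tendsto (fun n : ℕ => c0 - 2*c0/(n:ℝ)^((1:ℝ)/3)) atTop (nhds c0) := by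
    have := Tendsto.const_div_atTop Tn13 (2*c0)
    have h := tendsto_const_nhds (x := c0) (f := atTop (α := ℕ)) |>.sub this
    simpa using h
  have T3' : Tendsto (fun n : ℕ => (1/3 : ℝ) - (3*Real.log (Lf n)+2)/Real.log n)
      atTop (nhds (1/3)) := by
    have h := tendsto_const_nhds (x := (1/3:ℝ)) (f := atTop (α := ℕ)) |>.sub T3
    simpa using h
  have Tprod := ((T1.mul T2).mul T3').mul
    (tendsto_const_nhds (x := (6/(6:ℝ)^((1:ℝ)/3))) (f := atTop (α := ℕ)))
  have : (1 * c0) * (1/3) * (6/(6:ℝ)^((1:ℝ)/3)) = 1 := by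
    rw [one_mul]
    exact c0_id
  rw [this] at Tprod
  exact Tprod

lemma EV_eq : ∀ᶠ n : ℕ in atTop, B1 n * B2 n
    = psi n * ((1:ℝ)/6 * ((6*n:ℕ):ℝ)^((1:ℝ)/3) * Real.log n) := by
  filter_upwards [eventually_ge_atTop 2] with n hn2
  have hν : (0:ℝ) < (n:ℝ)^((1:ℝ)/3) := by
    have : (0:ℝ) < (n:ℝ) := by exact_mod_cast (by omega : 0 < n)
    positivity
  have hlogn : (0:ℝ) < Real.log n := Real.log_pos (by exact_mod_cast (by omega : 1 < n))
  have hl : (0:ℝ) < (Lf n : ℝ) := Lf_real_pos n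
  have h63 : (0:ℝ) < (6:ℝ)^((1:ℝ)/3) := by positivity
  have h6 : ((6*n:ℕ):ℝ)^((1:ℝ)/3) = (6:ℝ)^((1:ℝ)/3) * (n:ℝ)^((1:ℝ)/3) := by
    push_cast
    rw [← Real.mul_rpow (by norm_num) (by positivity)]
  unfold B1 B2 psi
  rw [h6, xf_eq]
  show (1 - 3/(Lf n : ℝ)) * (c0 * (n:ℝ)^((1:ℝ)/3) - 2*c0) * _ = _
  field_simp
  ring





lemma EV_logF : ∀ᶠ n : ℕ in atTop,
    (mfn n : ℝ) * (Real.log (wfn n) - 1) ≤ Real.log (wilfFixedCount n) := by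
  filter_upwards [EV_cf] with n hcf
  have hcount : Nat.factorial (wfn n) ^ (Kfn n) ≤ wilfFixedCount n :=
    core_count (wfn_pos n) (HH_holds n hcf)
  have hpos : (0:ℝ) < ((Nat.factorial (wfn n) ^ (Kfn n) : ℕ) : ℝ) := by
    have : 0 < Nat.factorial (wfn n) ^ (Kfn n) := by positivity
    exact_mod_cast this
  have h1 : Real.log ((Nat.factorial (wfn n) ^ (Kfn n) : ℕ) : ℝ)
      ≤ Real.log (wilfFixedCount n) := by
    apply Real.log_le_log hpos
    exact_mod_cast hcount
  have h2 : Real.log ((Nat.factorial (wfn n) ^ (Kfn n) : ℕ) : ℝ)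
      = (Kfn n : ℝ) * Real.log (Nat.factorial (wfn n)) := by
    push_cast
    rw [Real.log_pow]
  have h3 : (mfn n : ℝ) * (Real.log (wfn n) - 1)
      ≤ (Kfn n : ℝ) * Real.log (Nat.factorial (wfn n)) := by
    have hm : (mfn n : ℝ) = (Kfn n : ℝ) * (wfn n : ℝ) := by
      unfold mfn; push_cast; ring
    rw [hm, mul_assoc]
    apply mul_le_mul_of_nonneg_left _ (by positivity)
    exact fact_lb (wfn n)
  linarith [h1, h2.symm.le, h2.le]

lemma EV_main : ∀ᶠ n : ℕ in atTop,
    psi n * ((1:ℝ)/6 * ((6*n:ℕ):ℝ)^((1:ℝ)/3) * Real.log n) ≤ Real.log (wilfFixedCount n) := by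
  filter_upwards [EV_B1, EV_B2, EV_eq, EV_logF] with n h1 h2 heq hF
  rw [← heq]
  calc B1 n * B2 n ≤ (mfn n : ℝ) * B2 n := mul_le_mul_of_nonneg_right h1.2 h2.1
    _ ≤ (mfn n : ℝ) * (Real.log (wfn n) - 1) :=
        mul_le_mul_of_nonneg_left h2.2 (by positivity)
    _ ≤ Real.log (wilfFixedCount n) := hF


end WilfProof

open WilfProof in
/-- `log F(n) ≥ (1/6)(6n)^{1/3} log n · (1 + o(1))` as `n → ∞`. -/
theorem log_wilfFixedCount_lower :
    ∃ e : ℕ → ℝ, Filter.Tendsto e Filter.atTop (nhds 0) ∧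
      ∀ n : ℕ, Real.log (wilfFixedCount n) ≥
        (1 / 6) * ((6 * n : ℕ) : ℝ) ^ ((1 : ℝ) / 3) * Real.log n * (1 + e n) := by
  set g : ℕ → ℝ := fun n => (1 / 6) * ((6 * n : ℕ) : ℝ) ^ ((1 : ℝ) / 3) * Real.log n with hg
  refine ⟨fun n => if g n ≤ 0 then 0 else min 0 (Real.log (wilfFixedCount n) / g n - 1),
    ?_, ?_⟩
  · -- tendsto 0
    have hlow : Tendsto (fun n : ℕ => min 0 (psi n - 1)) atTop (nhds 0) := by
      have h := (tendsto_const_nhds (x := (0:ℝ)) (f := atTop (α := ℕ))).min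
        (Tpsi.sub (tendsto_const_nhds (x := (1:ℝ))))
      norm_num at h
      convert h using 2
    apply tendsto_of_tendsto_of_tendsto_of_le_of_le' hlow tendsto_const_nhds
    · -- lower bound eventually
      filter_upwards [EV_main, eventually_ge_atTop 2] with n hmain hn2
      have hgpos : 0 < g n := by
        rw [hg]
        have h1 : (0:ℝ) < ((6*n:ℕ):ℝ)^((1:ℝ)/3) := by
          have : (0:ℝ) < ((6*n:ℕ):ℝ) := by
            have : 0 < 6*n := by omega
            exact_mod_cast this
          positivity
        have h2 : (0:ℝ) < Real.log n := Real.log_pos (by exact_mod_cast (by omega : 1 < n))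
        positivity
      rw [if_neg (by linarith)]
      apply min_le_min le_rfl
      have : psi n ≤ Real.log (wilfFixedCount n) / g n := by
        rw [le_div_iff₀ hgpos]
        calc psi n * g n = psi n * ((1:ℝ)/6 * ((6*n:ℕ):ℝ)^((1:ℝ)/3) * Real.log n) := by rw [hg]
          _ ≤ _ := hmain
      linarith
    · -- upper bound ≤ 0 always
      apply Filter.Eventually.of_forall
      intro n
      by_cases h : g n ≤ 0
      · rw [if_pos h]
      · rw [if_neg h]
        exact min_le_left _ _
  · -- pointwise inequality
    intro n
    have hlognn : 0 ≤ Real.log (wilfFixedCount n) := Real.log_natCast_nonneg _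
    show Real.log (wilfFixedCount n) ≥
      g n * (1 + if g n ≤ 0 then 0 else min 0 (Real.log (wilfFixedCount n) / g n - 1))
    by_cases h : g n ≤ 0
    · rw [if_pos h]
      have : g n * (1 + 0) = g n := by ring
      rw [ge_iff_le, this]
      linarith
    · rw [if_neg h]
      push_neg at h
      rcases le_or_gt (Real.log (wilfFixedCount n) / g n - 1) 0 with hc | hc
      · rw [min_eq_right hc]
        have : g n * (1 + (Real.log (wilfFixedCount n) / g n - 1))
            = Real.log (wilfFixedCount n) := by
          field_simp
          ring
        rw [ge_iff_le, this]
      · rw [min_eq_left hc.le]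
        have h1 : 1 ≤ Real.log (wilfFixedCount n) / g n := by linarith
        rw [ge_iff_le]
        have := (one_le_div h).1 h1
        calc g n * (1 + 0) = g n := by ring
          _ ≤ Real.log (wilfFixedCount n) := this
end

section
/- If a fixed-point Wilf partition of n has exactly r distinct off-diagonal part sizes p with p > m (where (p,m) are its part-multiplicity pairs), then r ≤ (1/2)(6n)^{1/3}. -/
open Finset


private lemma gauss1 (N : ℕ) : 2 * ∑ k ∈ Icc 1 N, (k:ℤ) = N*(N+1) := by
  induction N with
  | zero => simp
  | succ n ih =>
    rw [Finset.sum_Icc_succ_top (by omega)]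
    push_cast
    push_cast at ih
    ring_nf; ring_nf at ih; linarith

private lemma gauss2 (N : ℕ) : 6 * ∑ k ∈ Icc 1 N, (k:ℤ)^2 = N*(N+1)*(2*N+1) := by
  induction N with
  | zero => simp
  | succ n ih =>
    rw [Finset.sum_Icc_succ_top (by omega)]
    push_cast
    push_cast at ih
    ring_nf; ring_nf at ih; linarith

private lemma key_rank (Q : Finset (ℕ × ℕ)) (hpos : ∀ q ∈ Q, 0 < q.1 ∧ 0 < q.2)
    (hx : ∀ q ∈ Q, ∀ q' ∈ Q, q.1 = q'.1 → q = q')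
    (hy : ∀ q ∈ Q, ∀ q' ∈ Q, q.2 = q'.2 → q = q') :
    (Q.card : ℤ) ^ 3 ≤ 6 * ∑ q ∈ Q, (q.1 : ℤ) * q.2 := by
  classical
  set N := Q.card with hN
  set rx : ℕ × ℕ → ℕ := fun q => (Q.filter fun q' => q'.1 ≤ q.1).card with hrxdef
  set v : ℕ × ℕ → ℕ := fun q => (Q.filter fun q' => q.2 ≤ q'.2).card with hvdef
  set ry : ℕ × ℕ → ℕ := fun q => (Q.filter fun q' => q'.2 ≤ q.2).card with hrydef
  -- rx bounds
  have hrx_le : ∀ q ∈ Q, rx q ≤ q.1 := by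
    intro q hq
    have : rx q ≤ (Icc 1 q.1).card := by
      apply Finset.card_le_card_of_injOn Prod.fst
      · intro a ha
        simp only [Finset.mem_coe, Finset.mem_filter] at ha
        have := (hpos a ha.1).1
        simp only [Finset.mem_coe, Finset.mem_Icc]
        exact ⟨this, ha.2⟩
      · intro a ha b hb hab
        simp only [Finset.coe_filter, Set.mem_setOf_eq] at ha hb
        exact hx a ha.1 b hb.1 hab
    simpa using this
  have hry_le : ∀ q ∈ Q, ry q ≤ q.2 := by
    intro q hq
    have : ry q ≤ (Icc 1 q.2).card := by
      apply Finset.card_le_card_of_injOn Prod.snd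
      · intro a ha
        simp only [Finset.mem_coe, Finset.mem_filter] at ha
        have := (hpos a ha.1).2
        simp only [Finset.mem_coe, Finset.mem_Icc]
        exact ⟨this, ha.2⟩
      · intro a ha b hb hab
        simp only [Finset.coe_filter, Set.mem_setOf_eq] at ha hb
        exact hy a ha.1 b hb.1 hab
    simpa using this
  -- strict monotonicity, injectivity of rx
  have hrx_mono : ∀ q ∈ Q, ∀ q' ∈ Q, q.1 < q'.1 → rx q < rx q' := by
    intro q hq q' hq' hlt
    apply Finset.card_lt_card
    have hsub : Q.filter (fun q'' => q''.1 ≤ q.1) ⊆ Q.filter (fun q'' => q''.1 ≤ q'.1) := by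
      intro a ha
      rw [Finset.mem_filter] at ha ⊢
      exact ⟨ha.1, le_trans ha.2 (le_of_lt hlt)⟩
    rw [Finset.ssubset_iff_of_subset hsub]
    exact ⟨q', Finset.mem_filter.2 ⟨hq', le_refl _⟩,
      fun hcon => absurd (Finset.mem_filter.1 hcon).2 (by omega)⟩
  have hrx_inj : ∀ q ∈ Q, ∀ q' ∈ Q, rx q = rx q' → q = q' := by
    intro q hq q' hq' heq
    by_contra hne
    have h1 : q.1 ≠ q'.1 := fun h => hne (hx q hq q' hq' h)
    rcases lt_or_gt_of_ne h1 with h | h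
    · exact absurd heq (ne_of_lt (hrx_mono q hq q' hq' h))
    · exact absurd heq.symm (ne_of_lt (hrx_mono q' hq' q hq h))
  have hv_mono : ∀ q ∈ Q, ∀ q' ∈ Q, q.2 < q'.2 → v q' < v q := by
    intro q hq q' hq' hlt
    apply Finset.card_lt_card
    have hsub : Q.filter (fun q'' => q'.2 ≤ q''.2) ⊆ Q.filter (fun q'' => q.2 ≤ q''.2) := by
      intro a ha
      rw [Finset.mem_filter] at ha ⊢
      exact ⟨ha.1, le_trans (le_of_lt hlt) ha.2⟩
    rw [Finset.ssubset_iff_of_subset hsub]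
    exact ⟨q, Finset.mem_filter.2 ⟨hq, le_refl _⟩,
      fun hcon => absurd (Finset.mem_filter.1 hcon).2 (by omega)⟩
  have hv_inj : ∀ q ∈ Q, ∀ q' ∈ Q, v q = v q' → q = q' := by
    intro q hq q' hq' heq
    by_contra hne
    have h1 : q.2 ≠ q'.2 := fun h => hne (hy q hq q' hq' h)
    rcases lt_or_gt_of_ne h1 with h | h
    · exact absurd heq.symm (ne_of_lt (hv_mono q hq q' hq' h))
    · exact absurd heq (ne_of_lt (hv_mono q' hq' q hq h))
  -- membership in Icc 1 N
  have hrx_mem : ∀ q ∈ Q, rx q ∈ Icc 1 N := by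
    intro q hq
    simp only [Finset.mem_Icc]
    constructor
    · have : q ∈ Q.filter (fun q'' => q''.1 ≤ q.1) := Finset.mem_filter.2 ⟨hq, le_refl _⟩
      exact Finset.card_pos.2 ⟨q, this⟩
    · exact Finset.card_le_card (Finset.filter_subset _ _)
  have hv_mem : ∀ q ∈ Q, v q ∈ Icc 1 N := by
    intro q hq
    simp only [Finset.mem_Icc]
    constructor
    · have : q ∈ Q.filter (fun q'' => q.2 ≤ q''.2) := Finset.mem_filter.2 ⟨hq, le_refl _⟩
      exact Finset.card_pos.2 ⟨q, this⟩
    · exact Finset.card_le_card (Finset.filter_subset _ _)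
  -- images are exactly Icc 1 N
  have himg_rx : Q.image rx = Icc 1 N := by
    apply Finset.eq_of_subset_of_card_le
    · intro k hk
      obtain ⟨q, hq, rfl⟩ := Finset.mem_image.1 hk
      exact hrx_mem q hq
    · rw [Finset.card_image_of_injOn (fun a ha b hb => hrx_inj a ha b hb), Nat.card_Icc]
      omega
  have himg_v : Q.image v = Icc 1 N := by
    apply Finset.eq_of_subset_of_card_le
    · intro k hk
      obtain ⟨q, hq, rfl⟩ := Finset.mem_image.1 hk
      exact hv_mem q hq
    · rw [Finset.card_image_of_injOn (fun a ha b hb => hv_inj a ha b hb), Nat.card_Icc]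
      omega
  -- ry + v = N + 1
  have hryv : ∀ q ∈ Q, ry q + v q = N + 1 := by
    intro q hq
    have hunion : (Q.filter fun q' => q'.2 ≤ q.2) ∪ (Q.filter fun q' => q.2 ≤ q'.2) = Q := by
      rw [← Finset.filter_or]
      rw [Finset.filter_true_of_mem]
      intro a _; exact le_total a.2 q.2
    have hinter : (Q.filter fun q' => q'.2 ≤ q.2) ∩ (Q.filter fun q' => q.2 ≤ q'.2) = {q} := by
      ext a
      simp only [Finset.mem_inter, Finset.mem_filter, Finset.mem_singleton]
      constructor
      · rintro ⟨⟨ha, h1⟩, _, h2⟩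
        exact hy a ha q hq (le_antisymm h1 h2)
      · rintro rfl
        exact ⟨⟨hq, le_refl _⟩, hq, le_refl _⟩
    have hcount := Finset.card_union_add_card_inter (Q.filter fun q' => q'.2 ≤ q.2)
      (Q.filter fun q' => q.2 ≤ q'.2)
    rw [hunion, hinter, Finset.card_singleton] at hcount
    simp only [hrydef, hvdef]
    omega
  clear_value rx v ry N
  clear hrxdef hvdef hrydef
  -- pointwise bound in ℤ
  have hpoint : ∀ q ∈ Q, (rx q : ℤ) * ((N:ℤ) + 1 - v q) ≤ (q.1 : ℤ) * q.2 := by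
    intro q hq
    have h1 : (rx q : ℤ) ≤ q.1 := by exact_mod_cast hrx_le q hq
    have h2 : ((N:ℤ) + 1 - v q) ≤ q.2 := by
      have := hryv q hq
      have := hry_le q hq
      omega
    have h3 : (0:ℤ) ≤ (N:ℤ) + 1 - v q := by
      have := hv_mem q hq
      simp only [Finset.mem_Icc] at this
      omega
    exact mul_le_mul h1 h2 h3 (by positivity)
  -- sums
  have hsum1 : ∑ q ∈ Q, (rx q : ℤ) = ∑ k ∈ Icc 1 N, (k:ℤ) := by
    rw [← himg_rx, Finset.sum_image (fun a ha b hb => hrx_inj a ha b hb)]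
  have hsum2 : ∑ q ∈ Q, (rx q : ℤ)^2 = ∑ k ∈ Icc 1 N, (k:ℤ)^2 := by
    rw [← himg_rx, Finset.sum_image (fun a ha b hb => hrx_inj a ha b hb)]
  have hsum3 : ∑ q ∈ Q, (v q : ℤ)^2 = ∑ k ∈ Icc 1 N, (k:ℤ)^2 := by
    rw [← himg_v, Finset.sum_image (fun a ha b hb => hv_inj a ha b hb)]
  -- Cauchy-Schwarz
  have hCS : (∑ q ∈ Q, (rx q : ℤ) * (v q : ℤ)) ≤ ∑ k ∈ Icc 1 N, (k:ℤ)^2 := by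
    have h : (∑ q ∈ Q, (rx q : ℤ) * (v q : ℤ))^2
        ≤ (∑ q ∈ Q, (rx q : ℤ)^2) * ∑ q ∈ Q, (v q : ℤ)^2 :=
      Finset.sum_mul_sq_le_sq_mul_sq Q _ _
    rw [hsum2, hsum3] at h
    have h1 : (0:ℤ) ≤ ∑ q ∈ Q, (rx q : ℤ) * (v q : ℤ) :=
      Finset.sum_nonneg (fun q _ => by positivity)
    have h2 : (0:ℤ) ≤ ∑ k ∈ Icc 1 N, (k:ℤ)^2 :=
      Finset.sum_nonneg (fun k _ => by positivity)
    have h' : (∑ q ∈ Q, (rx q : ℤ) * (v q : ℤ))^2 ≤ (∑ k ∈ Icc 1 N, (k:ℤ)^2)^2 := by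
      rw [pow_two (∑ k ∈ Icc 1 N, (k:ℤ)^2)]; exact h
    exact le_of_pow_le_pow_left₀ (by norm_num) h2 h'
  -- total sum bound
  have htot : ((N:ℤ) + 1) * (∑ k ∈ Icc 1 N, (k:ℤ)) - (∑ k ∈ Icc 1 N, (k:ℤ)^2)
      ≤ ∑ q ∈ Q, (q.1 : ℤ) * q.2 := by
    have h := Finset.sum_le_sum hpoint
    have heq : ∑ q ∈ Q, (rx q : ℤ) * ((N:ℤ) + 1 - v q)
        = ((N:ℤ) + 1) * (∑ q ∈ Q, (rx q : ℤ)) - ∑ q ∈ Q, (rx q : ℤ) * (v q : ℤ) := by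
      rw [Finset.mul_sum, ← Finset.sum_sub_distrib]
      apply Finset.sum_congr rfl
      intro q _
      ring
    rw [heq, hsum1] at h
    linarith
  have e1 : 6*(((N:ℤ)+1) * (∑ k ∈ Icc 1 N, (k:ℤ))) - 6*(∑ k ∈ Icc 1 N, (k:ℤ)^2)
      = (N:ℤ)*((N:ℤ)+1)*((N:ℤ)+2) := by
    linear_combination (3*((N:ℤ)+1)) * gauss1 N - gauss2 N
  have e2 : (N:ℤ)^3 ≤ (N:ℤ)*((N:ℤ)+1)*((N:ℤ)+2) := by
    have hNn : (0:ℤ) ≤ (N:ℤ) := Int.ofNat_nonneg N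
    nlinarith [hNn, sq_nonneg ((N:ℤ))]
  linarith [htot, e1, e2]

/-- If a fixed-point Wilf partition of `n` has exactly `r` off-diagonal pairs
`(p,m)` with `p > m`, then `r ≤ (1/2)(6n)^{1/3}`. -/
theorem fixed_wilf_off_diagonal_bound (n : ℕ) (S : Finset (ℕ × ℕ))
    (hS : IsWilfPartition n S) (hfix : IsFixedWilf S) (r : ℕ)
    (hr : r = (S.filter (fun q => q.2 < q.1)).card) :
    (r : ℝ) ≤ (1 / 2) * ((6 * n : ℕ) : ℝ) ^ ((1 : ℝ) / 3) := by
  classical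
  obtain ⟨hpos, hx, hy, hsum⟩ := hS
  set T := S.filter (fun q => q.2 < q.1) with hT
  set T' := S.filter (fun q => q.1 < q.2) with hT'
  set Q := S.filter (fun q => q.1 ≠ q.2) with hQ
  have hQT : Q = T ∪ T' := by
    ext q
    simp only [hQ, hT, hT', Finset.mem_union, Finset.mem_filter]
    have : q.1 ≠ q.2 ↔ (q.2 < q.1 ∨ q.1 < q.2) := by omega
    tauto
  have hdis : Disjoint T T' := by
    rw [Finset.disjoint_left]
    intro q hq hq'
    simp only [hT, hT', Finset.mem_filter] at hq hq'
    omega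
  have hcardT' : T'.card = T.card := by
    apply Finset.card_bij (fun q _ => (q.2, q.1))
    · intro q hq
      simp only [hT', Finset.mem_filter] at hq
      simp only [hT, Finset.mem_filter]
      exact ⟨hfix q hq.1, hq.2⟩
    · intro a _ b _ hab
      simpa [Prod.ext_iff, and_comm] using hab
    · intro b hb
      simp only [hT, Finset.mem_filter] at hb
      refine ⟨(b.2, b.1), ?_, rfl⟩
      simp only [hT', Finset.mem_filter]
      exact ⟨hfix b hb.1, hb.2⟩
  have hcardQ : Q.card = 2 * r := by
    rw [hQT, Finset.card_union_of_disjoint hdis, hcardT', hr]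
    omega
  have hQsub : Q ⊆ S := Finset.filter_subset _ _
  have hkey := key_rank Q (fun q hq => hpos q (hQsub hq))
    (fun q hq q' hq' h => hx q (hQsub hq) q' (hQsub hq') h)
    (fun q hq q' hq' h => hy q (hQsub hq) q' (hQsub hq') h)
  have hQsum : ∑ q ∈ Q, q.1 * q.2 ≤ n := by
    rw [← hsum]
    exact Finset.sum_le_sum_of_subset hQsub
  have h8 : (2 * r) ^ 3 ≤ 6 * n := by
    have h1 : ((2 * r : ℕ) : ℤ) ^ 3 ≤ 6 * ((∑ q ∈ Q, q.1 * q.2 : ℕ) : ℤ) := by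
      rw [← hcardQ]
      convert hkey using 2
      push_cast
      rfl
    have h2 : ((∑ q ∈ Q, q.1 * q.2 : ℕ) : ℤ) ≤ (n : ℤ) := by exact_mod_cast hQsum
    have : ((2 * r : ℕ) : ℤ) ^ 3 ≤ 6 * (n : ℤ) := by linarith
    exact_mod_cast this
  -- real part
  have hc : (((2 * r : ℕ) : ℝ)) ^ (3 : ℕ) ≤ ((6 * n : ℕ) : ℝ) := by exact_mod_cast h8
  have h0 : (0:ℝ) ≤ ((2 * r : ℕ) : ℝ) := by positivity
  have hmono := Real.rpow_le_rpow (by positivity) hc (by norm_num : (0:ℝ) ≤ 1/3)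
  rw [← Real.rpow_natCast (((2 * r : ℕ) : ℝ)) 3, ← Real.rpow_mul h0] at hmono
  norm_num at hmono
  push_cast
  linarith
end
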